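/- arXiv:alg-geom/9608034 — 6 statements merged into one kernel-verified Lean document; each statement's English description precedes it below -/
import Mathlib

section
/- Let σ ⊆ ℝ^k be a strongly convex rational polyhedral cone, i.e., σ is the convex cone generated by finitely many vectors of ℤ^k and σ ∩ (−σ) = {0}. Then the set S_σ = σ^∨ ∩ ℤ^k, where σ^∨ = {u ∈ ℝ^k : ⟨u, v⟩ ≥ 0 for all v ∈ σ} is the dual cone, is a finitely generated additive monoid (with respect to vector addition). -/
/-- Auxiliary: any subset of `ι → ℕ` (with `ι` finite) containing `0`... actually any
subset closed under "subtraction of members" is generated, as a submonoid, by a finite set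
(its minimal nonzero elements).  This is the Dickson-lemma core of Gordan's lemma. -/
private lemma gordan_aux {ι : Type} [Finite ι] (E : Set (ι → ℕ))
    (hsub : ∀ a c : ι → ℕ, a ∈ E → a + c ∈ E → c ∈ E) :
    ∃ G : Finset (ι → ℕ), ↑G ⊆ E ∧ ∀ a ∈ E, a ∈ AddSubmonoid.closure (G : Set (ι → ℕ)) := by
  classical
  have hpwo : ∀ s : Set (ι → ℕ), s.IsPWO :=
    fun s => Set.isPWO_of_wellQuasiOrderedLE s
  set M : Set (ι → ℕ) := {a | a ∈ E ∧ a ≠ 0} with hM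
  set G0 : Set (ι → ℕ) := {a | a ∈ M ∧ ∀ b ∈ M, b ≤ a → b = a} with hG0
  have hanti : IsAntichain (· ≤ ·) G0 := by
    intro a ha b hb hne hle
    exact hne (hb.2 a ha.1 hle)
  have hfin : G0.Finite := hanti.finite_of_partiallyWellOrderedOn (hpwo G0)
  have wf : WellFounded ((· < ·) : (ι → ℕ) → (ι → ℕ) → Prop) :=
    (Set.isWF_univ_iff.mp (hpwo _).isWF).wf
  refine ⟨hfin.toFinset, ?_, ?_⟩
  · intro a ha
    rw [Set.Finite.coe_toFinset] at ha
    exact ha.1.1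
  · intro a
    induction a using WellFounded.induction wf with
    | _ a IH =>
      intro ha
      by_cases h0' : a = 0
      · subst h0'; exact AddSubmonoid.zero_mem _
      · obtain ⟨g, hg, hmin⟩ := wf.has_min {b | b ∈ M ∧ b ≤ a} ⟨a, ⟨ha, h0'⟩, le_refl a⟩
        have hgG0 : g ∈ G0 := by
          refine ⟨hg.1, fun b hb hble => ?_⟩
          by_contra hne
          exact hmin b ⟨hb, le_trans hble hg.2⟩ (lt_of_le_of_ne hble hne)
        obtain ⟨c, rfl⟩ := exists_add_of_le hg.2
        have hcE : c ∈ E := hsub g c hg.1.1 ha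
        have hclt : c < g + c := by
          have : 0 < g := pos_iff_ne_zero.mpr hg.1.2
          exact lt_add_of_pos_left c this
        exact AddSubmonoid.add_mem _
          (AddSubmonoid.subset_closure (by rw [Set.Finite.coe_toFinset]; exact hgG0))
          (IH c hclt hcE)

/-- The "positive part / negative part" additive map used in the proof of Gordan's lemma. -/
private def gordanPhi (k m : ℕ) : (((Fin k ⊕ Fin k) ⊕ Fin m) → ℕ) →+ (Fin k → ℤ) where
  toFun a := fun j => (a (Sum.inl (Sum.inl j)) : ℤ) - (a (Sum.inl (Sum.inr j)) : ℤ)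
  map_zero' := by funext j; simp
  map_add' a b := by funext j; simp only [Pi.add_apply]; push_cast; ring

private lemma gordanPhi_apply (k m : ℕ) (a : ((Fin k ⊕ Fin k) ⊕ Fin m) → ℕ) (j : Fin k) :
    gordanPhi k m a j = (a (Sum.inl (Sum.inl j)) : ℤ) - (a (Sum.inl (Sum.inr j)) : ℤ) := rfl

/-- **Gordan's Lemma.** If `σ ⊆ ℝ^k` is a strongly convex rational polyhedral cone
(the convex cone generated by finitely many integer vectors, containing no nonzero
linear subspace), then `σ^∨ ∩ ℤ^k` is a finitely generated additive monoid. -/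
theorem gordan_dual_cone_lattice_points_fg
    (k m : ℕ) (v : Fin m → (Fin k → ℤ)) (σ : Set (Fin k → ℝ))
    (hσ : σ = {x | ∃ c : Fin m → ℝ, (∀ i, 0 ≤ c i) ∧
      x = ∑ i, c i • (fun j => (v i j : ℝ))})
    (hstrong : ∀ x ∈ σ, -x ∈ σ → x = 0) :
    ∃ T : Finset (Fin k → ℤ),
      {u : Fin k → ℤ | ∀ x ∈ σ, 0 ≤ ∑ j, (u j : ℝ) * x j} =
        ↑(AddSubmonoid.closure (T : Set (Fin k → ℤ))) := by
  classical
  set S : Set (Fin k → ℤ) := {u | ∀ i, 0 ≤ ∑ j, v i j * u j} with hSdef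
  -- Step 1: the dual-cone lattice points are exactly `S`.
  have hAS : {u : Fin k → ℤ | ∀ x ∈ σ, 0 ≤ ∑ j, (u j : ℝ) * x j} = S := by
    ext u
    constructor
    · intro hu i
      have hx : (fun j => (v i j : ℝ)) ∈ σ := by
        rw [hσ]
        refine ⟨fun i' => if i' = i then 1 else 0, fun i' => by dsimp only; split <;> norm_num, ?_⟩
        funext j
        rw [Finset.sum_apply]
        simp only [Pi.smul_apply, smul_eq_mul, ite_mul, one_mul, zero_mul]
        rw [Finset.sum_ite_eq' Finset.univ i (fun i' => ((v i' j : ℝ)))]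
        simp
      have h2 := hu _ hx
      have h3 : ((∑ j, v i j * u j : ℤ) : ℝ) = ∑ j, (u j : ℝ) * (v i j : ℝ) := by
        push_cast
        exact Finset.sum_congr rfl fun j _ => by ring
      rw [← h3] at h2
      exact_mod_cast h2
    · intro hu x hx
      rw [hσ] at hx
      obtain ⟨c, hc, rfl⟩ := hx
      have hxj : ∀ j, (∑ i, c i • (fun j' => (v i j' : ℝ))) j = ∑ i, c i * (v i j : ℝ) := by
        intro j; rw [Finset.sum_apply]; simp
      have hkey : ∑ j, (u j : ℝ) * (∑ i, c i • (fun j' => (v i j' : ℝ))) j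
          = ∑ i, c i * ∑ j, (v i j : ℝ) * (u j : ℝ) := by
        calc ∑ j, (u j : ℝ) * (∑ i, c i • (fun j' => (v i j' : ℝ))) j
            = ∑ j, ∑ i, c i * ((v i j : ℝ) * (u j : ℝ)) := by
              refine Finset.sum_congr rfl fun j _ => ?_
              rw [hxj j, Finset.mul_sum]
              exact Finset.sum_congr rfl fun i _ => by ring
          _ = ∑ i, ∑ j, c i * ((v i j : ℝ) * (u j : ℝ)) := Finset.sum_comm
          _ = ∑ i, c i * ∑ j, (v i j : ℝ) * (u j : ℝ) := by
              refine Finset.sum_congr rfl fun i _ => ?_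
              rw [Finset.mul_sum]
      rw [hkey]
      refine Finset.sum_nonneg fun i _ => mul_nonneg (hc i) ?_
      have hcast : ((∑ j, v i j * u j : ℤ) : ℝ) = ∑ j, (v i j : ℝ) * (u j : ℝ) := by
        push_cast; rfl
      rw [← hcast]
      exact_mod_cast hu i
  -- Step 2: `S` is the image under `gordanPhi` of the solution set `E`.
  set E : Set (((Fin k ⊕ Fin k) ⊕ Fin m) → ℕ) :=
    {a | ∀ i, ∑ j, v i j * gordanPhi k m a j = (a (Sum.inr i) : ℤ)} with hEdef
  have hEsub : ∀ a c, a ∈ E → a + c ∈ E → c ∈ E := by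
    intro a c ha hac i
    have h1 := ha i
    have h2 := hac i
    have h3 : ∑ j, v i j * gordanPhi k m (a + c) j
        = ∑ j, v i j * gordanPhi k m a j + ∑ j, v i j * gordanPhi k m c j := by
      simp only [map_add, Pi.add_apply, mul_add]
      exact Finset.sum_add_distrib
    have h4 : (((a + c) (Sum.inr i) : ℕ) : ℤ)
        = (a (Sum.inr i) : ℤ) + (c (Sum.inr i) : ℤ) := by
      simp [Pi.add_apply]
    rw [h3, h4, h1] at h2
    exact add_left_cancel h2
  have hSE : S = (gordanPhi k m) '' E := by
    ext u
    constructor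
    · intro hu
      set aa : ((Fin k ⊕ Fin k) ⊕ Fin m) → ℕ :=
        Sum.elim (Sum.elim (fun j => (u j).toNat) (fun j => (-(u j)).toNat))
          (fun i => (∑ j, v i j * u j).toNat) with haa
      have hΦ : gordanPhi k m aa = u := by
        funext j
        rw [gordanPhi_apply]
        simp only [haa, Sum.elim_inl, Sum.elim_inr]
        omega
      refine ⟨aa, ?_, hΦ⟩
      intro i
      rw [hΦ]
      have : aa (Sum.inr i) = (∑ j, v i j * u j).toNat := rfl
      rw [this, Int.toNat_of_nonneg (hu i)]
    · rintro ⟨a, haE, rfl⟩ i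
      rw [haE i]
      exact Int.natCast_nonneg _
  -- Step 3: assemble.
  obtain ⟨G, hGE, hGen⟩ := gordan_aux E hEsub
  refine ⟨G.image (fun a => gordanPhi k m a), ?_⟩
  rw [hAS]
  have hTS : ((G.image fun a => gordanPhi k m a : Finset (Fin k → ℤ)) : Set (Fin k → ℤ)) ⊆ S := by
    intro u hu
    simp only [Finset.coe_image, Set.mem_image, Finset.mem_coe] at hu
    obtain ⟨a, haG, rfl⟩ := hu
    rw [hSE]
    exact ⟨a, hGE haG, rfl⟩
  -- `S` as a submonoid
  let S' : AddSubmonoid (Fin k → ℤ) :=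
    { carrier := S
      zero_mem' := by intro i; simp
      add_mem' := by
        intro a b ha hb i
        have h3 : ∑ j, v i j * (a + b) j = ∑ j, v i j * a j + ∑ j, v i j * b j := by
          simp only [Pi.add_apply, mul_add]
          exact Finset.sum_add_distrib
        rw [h3]
        exact add_nonneg (ha i) (hb i) }
  apply Set.Subset.antisymm
  · intro u hu
    rw [hSE] at hu
    obtain ⟨a, haE, rfl⟩ := hu
    have hmem : gordanPhi k m a ∈ (AddSubmonoid.closure (G : Set _)).map (gordanPhi k m) :=
      ⟨a, hGen a haE, rfl⟩
    rw [AddMonoidHom.map_mclosure] at hmem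
    rwa [Finset.coe_image]
  · intro u hu
    have hle : AddSubmonoid.closure
        ((G.image fun a => gordanPhi k m a : Finset (Fin k → ℤ)) : Set (Fin k → ℤ)) ≤ S' :=
      AddSubmonoid.closure_le.mpr hTS
    exact hle hu
end

section
/- Let σ ⊆ ℝ^k be a rational polyhedral cone, i.e., the convex cone generated by finitely many vectors of ℤ^k. Then σ ∩ ℤ^k is a finitely generated additive monoid. -/
/-- If `σ ⊆ ℝ^k` is a rational polyhedral cone (the convex cone generated by finitely
many integer vectors), then `σ ∩ ℤ^k` is a finitely generated additive monoid. -/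
theorem rational_polyhedral_cone_lattice_points_fg
    (k m : ℕ) (v : Fin m → (Fin k → ℤ)) (σ : Set (Fin k → ℝ))
    (hσ : σ = {x | ∃ c : Fin m → ℝ, (∀ i, 0 ≤ c i) ∧
      x = ∑ i, c i • (fun j => (v i j : ℝ))}) :
    ∃ T : Finset (Fin k → ℤ),
      {u : Fin k → ℤ | (fun j => (u j : ℝ)) ∈ σ} =
        ↑(AddSubmonoid.closure (T : Set (Fin k → ℤ))) := by
  subst hσ
  set w : Fin m → (Fin k → ℝ) := fun i j => (v i j : ℝ) with hw
  -- the fundamental parallelepiped lattice points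
  set S : Set (Fin k → ℤ) := {u | ∃ t : Fin m → ℝ,
    (∀ i, 0 ≤ t i ∧ t i ≤ 1) ∧ (fun j => ((u j : ℝ))) = ∑ i, t i • w i} with hS
  have hbound : ∀ u ∈ S, ∀ j, |u j| ≤ ∑ i, |v i j| := by
    rintro u ⟨t, ht, hu⟩ j
    have h0 : (u j : ℝ) = ∑ i, t i * (v i j : ℝ) := by
      have := congrFun hu j
      simpa [hw, Finset.sum_apply] using this
    have h1 : |(u j : ℝ)| ≤ ∑ i, |(v i j : ℝ)| := by
      rw [h0]
      calc |∑ i, t i * (v i j : ℝ)| ≤ ∑ i, |t i * (v i j : ℝ)| :=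
            Finset.abs_sum_le_sum_abs _ _
        _ ≤ ∑ i, |(v i j : ℝ)| := by
            apply Finset.sum_le_sum
            intro i _
            rw [abs_mul]
            calc |t i| * |(v i j : ℝ)| ≤ 1 * |(v i j : ℝ)| := by
                  apply mul_le_mul_of_nonneg_right _ (abs_nonneg _)
                  rw [abs_le]; exact ⟨by linarith [(ht i).1], (ht i).2⟩
              _ = |(v i j : ℝ)| := one_mul _
    exact_mod_cast h1
  have hSfin : S.Finite := by
    apply Set.Finite.subset (Set.Finite.pi
      (fun j => Set.finite_Icc (-(∑ i, |v i j|)) (∑ i, |v i j|)))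
    intro u hu
    intro j _
    have := hbound u hu j
    rw [abs_le] at this
    exact ⟨this.1, this.2⟩
  refine ⟨hSfin.toFinset, ?_⟩
  have hvS : ∀ i, v i ∈ S := by
    intro i
    refine ⟨fun i' => if i' = i then 1 else 0, fun i' => by dsimp only; split <;> norm_num, ?_⟩
    funext j
    simp [hw, ite_smul, Finset.sum_apply, ite_apply, Finset.sum_ite_eq']
  apply Set.eq_of_subset_of_subset
  · -- lattice points of σ ⊆ closure T
    rintro u ⟨c, hc, hu⟩
    simp only [SetLike.mem_coe]
    set n : Fin m → ℕ := fun i => ⌊c i⌋₊ with hn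
    set r : Fin k → ℤ := u - ∑ i, n i • v i with hr
    have hrS : r ∈ S := by
      refine ⟨fun i => c i - n i, ?_, ?_⟩
      · intro i
        constructor
        · have := Nat.floor_le (hc i); simpa [hn] using sub_nonneg.mpr this
        · have := (Nat.lt_floor_add_one (c i)).le; simp [hn]; linarith
      · funext j
        have hu' : (u j : ℝ) = ∑ i, c i * (v i j : ℝ) := by
          have := congrFun hu j
          simpa [hw, Finset.sum_apply] using this
        simp only [hr, Pi.sub_apply, Finset.sum_apply, Pi.smul_apply, smul_eq_mul]
        push_cast
        rw [hu', ← Finset.sum_sub_distrib]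
        apply Finset.sum_congr rfl; intro i _; simp only [hw, nsmul_eq_mul]; push_cast; ring
    have hu_eq : u = r + ∑ i, n i • v i := by
      simp [hr]
    rw [hu_eq]
    apply AddSubmonoid.add_mem
    · exact AddSubmonoid.subset_closure (by simpa using hrS)
    · apply AddSubmonoid.sum_mem
      intro i _
      exact (AddSubmonoid.closure _).nsmul_mem
        (AddSubmonoid.subset_closure (by simpa using hvS i)) _
  · -- closure T ⊆ lattice points of σ
    intro u hu
    simp only [SetLike.mem_coe] at hu
    induction hu using AddSubmonoid.closure_induction with
    | mem x hx =>
      have hxS : x ∈ S := by simpa using hx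
      obtain ⟨t, ht, hx'⟩ := hxS
      exact ⟨t, fun i => (ht i).1, hx'⟩
    | zero =>
      exact ⟨0, fun i => le_refl 0, by funext j; simp⟩
    | add a b _ _ ha hb =>
      obtain ⟨c1, hc1, ha'⟩ := ha
      obtain ⟨c2, hc2, hb'⟩ := hb
      refine ⟨c1 + c2, fun i => add_nonneg (hc1 i) (hc2 i), ?_⟩
      funext j
      have ha'' := congrFun ha' j
      have hb'' := congrFun hb' j
      simp only [Finset.sum_apply, Pi.add_apply, Pi.smul_apply, smul_eq_mul] at *
      push_cast
      rw [ha'', hb'', ← Finset.sum_add_distrib]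
      congr 1; funext i; ring
end

section
/- Let v_1, …, v_s ∈ ℤ^k and a_1, …, a_s ∈ ℤ, and for each integer n ≥ 0 set P_n = {u ∈ ℝ^k : ⟨u, v_i⟩ ≥ −n·a_i for all i = 1, …, s}. Assume P_1 is bounded. Then the set S = {(u, n) ∈ ℤ^k × ℕ : ⟨u, v_i⟩ ≥ −n·a_i for all i = 1, …, s} is a finitely generated additive submonoid of ℤ^k × ℕ. -/
/-- **Dickson-type lemma**: a submonoid of `ι → ℕ` closed under subtraction of
dominated members is finitely generated. -/
lemma fg_of_sub_closed {ι : Type*} [Fintype ι] (B : AddSubmonoid (ι → ℕ))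
    (hsub : ∀ a ∈ B, ∀ b ∈ B, b ≤ a → a - b ∈ B) : B.FG := by
  classical
  set s : Set (ι → ℕ) := {b | b ∈ B ∧ b ≠ 0 ∧ ∀ c ∈ B, c ≠ 0 → c ≤ b → c = b} with hs
  have hanti : IsAntichain (· ≤ ·) s := by
    intro x hx y hy hxy hle
    exact hxy (hy.2.2 x hx.1 hx.2.1 hle)
  have hfin : s.Finite :=
    hanti.finite_of_partiallyWellOrderedOn
      (Set.isPWO_of_wellQuasiOrderedLE s)
  refine ⟨hfin.toFinset, ?_⟩
  rw [Set.Finite.coe_toFinset]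
  apply le_antisymm
  · rw [AddSubmonoid.closure_le]
    exact fun x hx => hx.1
  · intro b hb
    have key : ∀ N : ℕ, ∀ b ∈ B, (∑ i, b i) ≤ N → b ∈ AddSubmonoid.closure s := by
      intro N
      induction N with
      | zero =>
        intro b hb hN
        have hb0 : b = 0 := by
          funext i
          have h1 : b i ≤ ∑ j, b j := Finset.single_le_sum (fun j _ => Nat.zero_le _)
            (Finset.mem_univ i)
          simp only [Pi.zero_apply]
          omega
        rw [hb0]
        exact zero_mem _
      | succ N ih =>
        intro b hb hN
        by_cases hb0 : b = 0
        · rw [hb0]; exact zero_mem _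
        · -- pick a nonzero element of B below b of minimal coordinate sum
          have hne : ∃ n : ℕ, ∃ c, c ∈ B ∧ c ≠ 0 ∧ c ≤ b ∧ ∑ i, c i = n :=
            ⟨∑ i, b i, b, hb, hb0, le_refl b, rfl⟩
          obtain ⟨c, hcB, hc0, hcb, hcsum⟩ := Nat.find_spec hne
          have hmin : ∀ c' , c' ∈ B → c' ≠ 0 → c' ≤ b → Nat.find hne ≤ ∑ i, c' i := by
            intro c' h1 h2 h3
            exact Nat.find_min' hne ⟨c', h1, h2, h3, rfl⟩
          have hcs : c ∈ s := by
            refine ⟨hcB, hc0, fun c' h1 h2 h3 => ?_⟩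
            have h4 : c' ≤ b := le_trans h3 hcb
            have h5 : ∑ i, c' i ≤ ∑ i, c i :=
              Finset.sum_le_sum fun i _ => Pi.le_def.mp h3 i
            have h6 : ∑ i, c' i = ∑ i, c i := by
              have := hmin c' h1 h2 h4; omega
            by_contra hne'
            obtain ⟨i, hi⟩ : ∃ i, c' i ≠ c i := by
              by_contra h; push_neg at h; exact hne' (funext h)
            have : ∑ i, c' i < ∑ i, c i :=
              Finset.sum_lt_sum (fun j _ => Pi.le_def.mp h3 j)
                ⟨i, Finset.mem_univ i, lt_of_le_of_ne (Pi.le_def.mp h3 i) hi⟩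
            omega
          have hbc : c + (b - c) = b := by
            funext i
            have h7 : c i ≤ b i := Pi.le_def.mp hcb i
            simp only [Pi.add_apply, Pi.sub_apply]
            omega
          have hsum : ∑ i, c i + ∑ i, (b - c) i = ∑ i, b i := by
            rw [← Finset.sum_add_distrib]
            exact Finset.sum_congr rfl fun i _ => by
              have := congrFun hbc i; simpa using this
          have hcpos : 1 ≤ ∑ i, c i := by
            rcases Function.ne_iff.1 hc0 with ⟨i, hi⟩
            have h1 : 1 ≤ c i := Nat.one_le_iff_ne_zero.mpr (by simpa using hi)
            calc 1 ≤ c i := h1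
              _ ≤ ∑ j, c j := Finset.single_le_sum (fun j _ => Nat.zero_le _) (Finset.mem_univ i)
          have hrec : b - c ∈ AddSubmonoid.closure s := by
            refine ih (b - c) (hsub b hb c hcB hcb) ?_
            omega
          have : c + (b - c) ∈ AddSubmonoid.closure s :=
            add_mem (AddSubmonoid.subset_closure hcs) hrec
          rwa [hbc] at this
    exact key (∑ i, b i) b hb le_rfl

/-- The submonoid of elements of `M` on which `f` is nonnegative. -/
def sliceSubmonoid {G : Type*} [AddCommMonoid G] (M : AddSubmonoid G) (f : G →+ ℤ) :
    AddSubmonoid G where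
  carrier := {x | x ∈ M ∧ 0 ≤ f x}
  zero_mem' := ⟨M.zero_mem, by simp⟩
  add_mem' := fun ha hb => ⟨M.add_mem ha.1 hb.1, by rw [map_add]; exact add_nonneg ha.2 hb.2⟩

lemma sliceSubmonoid_fg {G : Type*} [AddCommMonoid G] (M : AddSubmonoid G) (hM : M.FG)
    (f : G →+ ℤ) : (sliceSubmonoid M f).FG := by
  classical
  obtain ⟨T, hT⟩ := hM
  -- the evaluation homomorphism
  set ψ : (Option ↥T → ℕ) →+ G :=
    { toFun := fun c => ∑ t : ↥T, c (some t) • (t : G)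
      map_zero' := by simp
      map_add' := fun a b => by
        simp only [Pi.add_apply, add_smul, Finset.sum_add_distrib] } with hψ
  set B : AddSubmonoid (Option ↥T → ℕ) :=
    { carrier := {c | f (ψ c) = c none}
      zero_mem' := by simp
      add_mem' := fun {a b} ha hb => by
        simp only [Set.mem_setOf_eq] at ha hb ⊢
        rw [map_add, map_add, ha, hb, Pi.add_apply]
        push_cast; ring } with hB
  have hBfg : B.FG := by
    apply fg_of_sub_closed
    intro x hx y hy hle
    have hx' : f (ψ x) = (x none : ℤ) := hx
    have hy' : f (ψ y) = (y none : ℤ) := hy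
    show f (ψ (x - y)) = ((x - y) none : ℤ)
    have hxy : y + (x - y) = x := by
      funext i
      have hi : y i ≤ x i := Pi.le_def.mp hle i
      simp only [Pi.add_apply, Pi.sub_apply]
      omega
    have h1 : f (ψ y) + f (ψ (x - y)) = f (ψ x) := by
      rw [← map_add, ← map_add, hxy]
    have h2 : (x - y) none = x none - y none := rfl
    rw [h2]
    have h3 : y none ≤ x none := Pi.le_def.mp hle none
    push_cast [h2, Nat.cast_sub h3]
    omega
  have hrep : ∀ x ∈ AddSubmonoid.closure (T : Set G),
      ∃ c : ↥T → ℕ, ∑ t : ↥T, c t • (t : G) = x := by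
    intro x hx'
    induction hx' using AddSubmonoid.closure_induction with
    | mem z hz =>
      refine ⟨Pi.single ⟨z, hz⟩ 1, ?_⟩
      rw [Finset.sum_eq_single (⟨z, hz⟩ : ↥T)]
      · simp
      · intro b _ hb; simp [Pi.single_apply, hb]
      · intro h; exact absurd (Finset.mem_univ _) h
    | zero => exact ⟨0, by simp⟩
    | add y z hy hz hy' hz' =>
      obtain ⟨c₁, hc₁⟩ := hy'
      obtain ⟨c₂, hc₂⟩ := hz'
      refine ⟨c₁ + c₂, ?_⟩
      rw [← hc₁, ← hc₂, ← Finset.sum_add_distrib]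
      exact Finset.sum_congr rfl fun t _ => by
        simp only [Pi.add_apply]; rw [add_smul]
  have hmap : sliceSubmonoid M f = B.map ψ := by
    ext x
    constructor
    · rintro ⟨hxM, hfx⟩
      obtain ⟨c, hc⟩ := hrep x (by rw [hT]; exact hxM)
      refine ⟨fun o => Option.elim o (f x).toNat c, ?_, ?_⟩
      · show f (ψ _) = _
        simp only [hψ, AddMonoidHom.coe_mk, ZeroHom.coe_mk, Option.elim]
        rw [hc]
        exact (Int.toNat_of_nonneg hfx).symm
      · show ψ _ = x
        simp only [hψ, AddMonoidHom.coe_mk, ZeroHom.coe_mk, Option.elim]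
        exact hc
    · rintro ⟨c, hc, rfl⟩
      constructor
      · apply AddSubmonoid.sum_mem
        intro t _
        have ht : (t : G) ∈ M := by rw [← hT]; exact AddSubmonoid.subset_closure t.2
        exact nsmul_mem ht _
      · rw [hc]; exact Int.ofNat_nonneg _
  rw [hmap]
  exact hBfg.map ψ

/-- The submonoid of elements of `M` on which all functionals in `l` are nonnegative. -/
def polySubmonoid {G : Type*} [AddCommMonoid G] (M : AddSubmonoid G) (l : List (G →+ ℤ)) :
    AddSubmonoid G where
  carrier := {x | x ∈ M ∧ ∀ f ∈ l, 0 ≤ f x}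
  zero_mem' := ⟨M.zero_mem, fun f _ => by simp⟩
  add_mem' := fun ha hb => ⟨M.add_mem ha.1 hb.1, fun f hf => by
    rw [map_add]; exact add_nonneg (ha.2 f hf) (hb.2 f hf)⟩

lemma mem_polySubmonoid {G : Type*} [AddCommMonoid G] {M : AddSubmonoid G}
    {l : List (G →+ ℤ)} {x : G} :
    x ∈ polySubmonoid M l ↔ x ∈ M ∧ ∀ f ∈ l, 0 ≤ f x := Iff.rfl

lemma mem_sliceSubmonoid {G : Type*} [AddCommMonoid G] {M : AddSubmonoid G}
    {f : G →+ ℤ} {x : G} :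
    x ∈ sliceSubmonoid M f ↔ x ∈ M ∧ 0 ≤ f x := Iff.rfl

lemma polySubmonoid_fg {G : Type*} [AddCommMonoid G] :
    ∀ (l : List (G →+ ℤ)) (M : AddSubmonoid G), M.FG → (polySubmonoid M l).FG := by
  intro l
  induction l with
  | nil =>
    intro M hM
    have : polySubmonoid M [] = M := by
      ext x; simp [mem_polySubmonoid]
    rw [this]; exact hM
  | cons f l ih =>
    intro M hM
    have : polySubmonoid M (f :: l) = polySubmonoid (sliceSubmonoid M f) l := by
      ext x
      simp only [mem_polySubmonoid, mem_sliceSubmonoid, List.mem_cons, forall_eq_or_imp]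
      tauto
    rw [this]
    exact ih _ (sliceSubmonoid_fg M hM f)

lemma top_fg_pi_nat (k : ℕ) : (⊤ : AddSubmonoid ((Fin k → ℤ) × ℕ)).FG := by
  classical
  set E : Finset ((Fin k → ℤ) × ℕ) :=
    insert ((0 : Fin k → ℤ), 1)
      ((Finset.univ.image fun j : Fin k => ((Pi.single j (1 : ℤ) : Fin k → ℤ), 0)) ∪
       (Finset.univ.image fun j : Fin k => ((Pi.single j (-1 : ℤ) : Fin k → ℤ), 0))) with hE
  refine ⟨E, ?_⟩
  apply le_antisymm le_top
  rintro ⟨u, n⟩ -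
  have h1 : ((0 : Fin k → ℤ), 1) ∈ AddSubmonoid.closure (E : Set ((Fin k → ℤ) × ℕ)) :=
    AddSubmonoid.subset_closure (by simp [hE])
  have h2 : ∀ j : Fin k, ((Pi.single j (1 : ℤ) : Fin k → ℤ), 0) ∈
      AddSubmonoid.closure (E : Set ((Fin k → ℤ) × ℕ)) :=
    fun j => AddSubmonoid.subset_closure (by simp [hE])
  have h3 : ∀ j : Fin k, ((Pi.single j (-1 : ℤ) : Fin k → ℤ), 0) ∈
      AddSubmonoid.closure (E : Set ((Fin k → ℤ) × ℕ)) :=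
    fun j => AddSubmonoid.subset_closure (by simp [hE])
  have key : (u, n) = n • ((0 : Fin k → ℤ), (1 : ℕ)) +
      ∑ j : Fin k, ((u j).toNat • ((Pi.single j (1 : ℤ) : Fin k → ℤ), (0 : ℕ)) +
        (-(u j)).toNat • ((Pi.single j (-1 : ℤ) : Fin k → ℤ), (0 : ℕ))) := by
    refine Prod.ext ?_ ?_
    · funext x
      simp only [Prod.fst_add, Prod.fst_sum, Prod.smul_fst, smul_zero, Pi.add_apply,
        Pi.zero_apply, zero_add, Finset.sum_apply, Prod.fst_add, Prod.smul_fst]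
      rw [Finset.sum_eq_single x]
      · simp only [Pi.add_apply, Pi.smul_apply, Pi.single_eq_same, smul_eq_mul,
          nsmul_eq_mul, mul_one, mul_neg, mul_one]
        omega
      · intro b _ hb
        simp [Pi.single_apply, hb.symm]
      · intro h; exact absurd (Finset.mem_univ _) h
    · simp [Prod.snd_sum]
  rw [key]
  exact add_mem (nsmul_mem h1 n)
    (AddSubmonoid.sum_mem _ fun j _ => add_mem (nsmul_mem (h2 j) _) (nsmul_mem (h3 j) _))

/-- Let `v₁, …, vₛ ∈ ℤ^k`, `a₁, …, aₛ ∈ ℤ`, and `Pₙ = {u ∈ ℝ^k | ⟨u, vᵢ⟩ ≥ -n·aᵢ}`.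
If `P₁` is bounded, then `S = {(u, n) ∈ ℤ^k × ℕ | ⟨u, vᵢ⟩ ≥ -n·aᵢ for all i}`
is a finitely generated additive submonoid of `ℤ^k × ℕ`. -/
theorem polytope_cone_lattice_points_fg
    (k s : ℕ) (v : Fin s → (Fin k → ℤ)) (a : Fin s → ℤ)
    (hbdd : Bornology.IsBounded
      {u : Fin k → ℝ | ∀ i, -(a i : ℝ) ≤ ∑ j, u j * (v i j : ℝ)}) :
    ∃ T : Finset ((Fin k → ℤ) × ℕ),
      {p : (Fin k → ℤ) × ℕ | ∀ i, -((p.2 : ℤ) * a i) ≤ ∑ j, p.1 j * v i j} =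
        ↑(AddSubmonoid.closure (T : Set ((Fin k → ℤ) × ℕ))) := by
  classical
  set F : Fin s → ((Fin k → ℤ) × ℕ →+ ℤ) := fun i =>
    { toFun := fun p => (∑ j, p.1 j * v i j) + (p.2 : ℤ) * a i
      map_zero' := by simp
      map_add' := fun p q => by
        simp only [Prod.fst_add, Prod.snd_add, Pi.add_apply, add_mul,
          Finset.sum_add_distrib, Nat.cast_add]
        ring } with hF
  obtain ⟨T, hT⟩ := polySubmonoid_fg (List.ofFn F) ⊤ (top_fg_pi_nat k)
  refine ⟨T, ?_⟩
  have hset : {p : (Fin k → ℤ) × ℕ | ∀ i, -((p.2 : ℤ) * a i) ≤ ∑ j, p.1 j * v i j} =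
      (polySubmonoid ⊤ (List.ofFn F) : Set ((Fin k → ℤ) × ℕ)) := by
    ext p
    simp only [Set.mem_setOf_eq, SetLike.mem_coe, mem_polySubmonoid, hF,
      AddSubmonoid.mem_top, true_and, List.forall_mem_ofFn_iff, AddMonoidHom.coe_mk,
      ZeroHom.coe_mk]
    constructor
    · intro h i; have := h i; omega
    · intro h i; have := h i; omega
  rw [hset, ← hT]
end

section
/- Let K be a field, let v_1, …, v_s ∈ ℤ^k and a_1, …, a_s ∈ ℤ, and set S = {(u, n) ∈ ℤ^k × ℕ : ⟨u, v_i⟩ ≥ −n·a_i for all i = 1, …, s}, an additive submonoid of ℤ^k × ℕ. Assume P_1 = {u ∈ ℝ^k : ⟨u, v_i⟩ ≥ −a_i for all i} is bounded. Then the monoid algebra K[S] (the K-algebra with K-basis the elements of S and multiplication induced by addition in S) is a finitely generated K-algebra. -/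
open AddSubmonoid in
/-- Abstract finite-generation criterion (Hilbert basis / Dickson style): if from any
sequence of nonzero elements of `S` one can extract `i < j` such that `f j` equals `f i`
or splits off `f i` with a remainder in `S` of strictly smaller "size" `μ`, then `S` is
finitely generated. -/
theorem addSubmonoid_fg_of_pwo {M : Type*} [AddCommMonoid M] (S : AddSubmonoid M) (μ : M → ℕ)
    (H : ∀ f : ℕ → M, (∀ n, f n ∈ S) → (∀ n, f n ≠ 0) →
      ∃ i j, i < j ∧ (f i = f j ∨ ∃ r ∈ S, f i + r = f j ∧ μ r < μ (f j))) :
    S.FG := by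
  classical
  by_contra hfg
  have key : ∀ F : Finset M, (↑F : Set M) ⊆ ↑S →
      ∃ x, x ∈ S ∧ x ∉ closure (↑F : Set M) ∧
        ∀ y, y ∈ S → y ∉ closure (↑F : Set M) → μ x ≤ μ y := by
    intro F hF
    have hle : closure (↑F : Set M) ≤ S := closure_le.2 hF
    have hne : closure (↑F : Set M) ≠ S := fun h => hfg ⟨F, h⟩
    have hex : ∃ x, x ∈ S ∧ x ∉ closure (↑F : Set M) := by
      by_contra h
      push_neg at h
      exact hne (le_antisymm hle fun x hx => h x hx)
    obtain ⟨x0, hx0⟩ := hex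
    have hn : ∃ n : ℕ, ∃ x, (x ∈ S ∧ x ∉ closure (↑F : Set M)) ∧ μ x = n :=
      ⟨μ x0, x0, hx0, rfl⟩
    obtain ⟨x, hx, hxn⟩ := Nat.find_spec hn
    exact ⟨x, hx.1, hx.2, fun y hy hy' => hxn ▸ Nat.find_min' hn ⟨y, ⟨hy, hy'⟩, rfl⟩⟩
  choose g hg1 hg2 hg3 using key
  let D : ℕ → {F : Finset M // (↑F : Set M) ⊆ ↑S} := fun n =>
    Nat.rec ⟨∅, by simp⟩
      (fun _ p => ⟨insert (g p.1 p.2) p.1, by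
        rw [Finset.coe_insert]
        exact Set.insert_subset (hg1 p.1 p.2) p.2⟩) n
  let f : ℕ → M := fun n => g (D n).1 (D n).2
  have hDs : ∀ n, (D (n + 1)).1 = insert (f n) (D n).1 := fun n => rfl
  have hfS : ∀ n, f n ∈ S := fun n => hg1 (D n).1 (D n).2
  have hfnc : ∀ n, f n ∉ closure (↑(D n).1 : Set M) := fun n => hg2 (D n).1 (D n).2
  have hfmin : ∀ n, ∀ y, y ∈ S → y ∉ closure (↑(D n).1 : Set M) → μ (f n) ≤ μ y :=
    fun n => hg3 (D n).1 (D n).2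
  have hfne : ∀ n, f n ≠ 0 := fun n h => hfnc n (h ▸ (closure (↑(D n).1 : Set M)).zero_mem)
  have hmono : ∀ i j, i < j → f i ∈ (D j).1 := by
    intro i j hij
    induction j with
    | zero => omega
    | succ j ih =>
      rw [hDs j, Finset.mem_insert]
      rcases Nat.lt_succ_iff_lt_or_eq.1 hij with h | h
      · exact Or.inr (ih h)
      · exact Or.inl (by rw [h])
  obtain ⟨i, j, hij, hcase⟩ := H f hfS hfne
  have hfiF : f i ∈ closure (↑(D j).1 : Set M) :=
    subset_closure (Finset.mem_coe.2 (hmono i j hij))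
  rcases hcase with heq | ⟨r, hrS, hadd, hlt⟩
  · exact hfnc j (heq ▸ hfiF)
  · have hr : r ∉ closure (↑(D j).1 : Set M) := fun hr =>
      hfnc j (hadd ▸ add_mem hfiF hr)
    exact absurd (hfmin j r hrS hr) (not_le.mpr hlt)

/-- Gordan's lemma for the submonoid of `ℤ^k × ℕ` cut out by the inequalities
`⟨u, vᵢ⟩ ≥ -n·aᵢ`. -/
theorem aux_gordan (k s : ℕ) (v : Fin s → (Fin k → ℤ)) (a : Fin s → ℤ)
    (S : AddSubmonoid ((Fin k → ℤ) × ℕ))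
    (hS : (S : Set ((Fin k → ℤ) × ℕ)) =
      {p : (Fin k → ℤ) × ℕ | ∀ i, -((p.2 : ℤ) * a i) ≤ ∑ j, p.1 j * v i j}) :
    S.FG := by
  classical
  set P := (Fin k → ℤ) × ℕ
  set c : Fin s → P → ℤ := fun i p => (∑ j, p.1 j * v i j) + (p.2 : ℤ) * a i with hc_def
  have hmem : ∀ p : P, p ∈ S ↔ ∀ i, 0 ≤ c i p := by
    intro p
    rw [← SetLike.mem_coe, hS]
    simp only [Set.mem_setOf_eq, hc_def]
    constructor <;> intro h i <;> have := h i <;> linarith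
  set μ : P → ℕ := fun p => p.2 + ∑ j, (p.1 j).natAbs with hμ_def
  apply addSubmonoid_fg_of_pwo S μ
  intro f hfS hfne
  set ι := (Fin k ⊕ Fin k) ⊕ (Fin s ⊕ Fin 1) with hι
  set Φ : P → ι → ℕ := fun p =>
    Sum.elim (Sum.elim (fun j => (p.1 j).toNat) (fun j => (-(p.1 j)).toNat))
      (Sum.elim (fun i => (c i p).toNat) (fun _ => p.2)) with hΦ_def
  obtain ⟨i, j, hij, hle⟩ :=
    Set.isPWO_of_wellQuasiOrderedLE (Set.univ : Set (ι → ℕ))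
      (fun n => ⟨Φ (f n), Set.mem_univ _⟩)
  have hle' : ∀ x : ι, Φ (f i) x ≤ Φ (f j) x := fun x => hle x
  have hpos : ∀ t, ((f i).1 t).toNat ≤ ((f j).1 t).toNat :=
    fun t => hle' (Sum.inl (Sum.inl t))
  have hneg : ∀ t, (-(f i).1 t).toNat ≤ (-(f j).1 t).toNat :=
    fun t => hle' (Sum.inl (Sum.inr t))
  have hc : ∀ t, (c t (f i)).toNat ≤ (c t (f j)).toNat :=
    fun t => hle' (Sum.inr (Sum.inl t))
  have hn2 : (f i).2 ≤ (f j).2 := hle' (Sum.inr (Sum.inr 0))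
  refine ⟨i, j, hij, ?_⟩
  by_cases heq : f i = f j
  · exact Or.inl heq
  right
  have hci := (hmem _).1 (hfS i)
  have hcj := (hmem _).1 (hfS j)
  have hcle : ∀ t, c t (f i) ≤ c t (f j) := by
    intro t
    have h1 := hci t
    have h2 := hcj t
    have h3 := hc t
    omega
  refine ⟨((f j).1 - (f i).1, (f j).2 - (f i).2), ?_, ?_, ?_⟩
  · -- remainder lies in S
    rw [hmem]
    intro t
    have hcast : (((f j).2 - (f i).2 : ℕ) : ℤ) = ((f j).2 : ℤ) - ((f i).2 : ℤ) := by omega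
    have : c t ((f j).1 - (f i).1, (f j).2 - (f i).2) = c t (f j) - c t (f i) := by
      simp only [hc_def, hcast, Pi.sub_apply, sub_mul, Finset.sum_sub_distrib]
      ring
    rw [this]
    have := hcle t
    have := hci t
    linarith
  · -- it splits f j
    have h1 : (f i).1 + ((f j).1 - (f i).1) = (f j).1 := by
      funext t
      simp only [Pi.add_apply, Pi.sub_apply]
      ring
    have h2 : (f i).2 + ((f j).2 - (f i).2) = (f j).2 := by omega
    exact Prod.ext h1 h2
  · -- the size strictly drops
    have habs : ∀ t, ((f j).1 t - (f i).1 t).natAbs + ((f i).1 t).natAbs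
        = ((f j).1 t).natAbs := by
      intro t
      have h1 := hpos t
      have h2 := hneg t
      omega
    have hμadd : μ ((f j).1 - (f i).1, (f j).2 - (f i).2) + μ (f i) = μ (f j) := by
      simp only [hμ_def, Pi.sub_apply]
      have : (∑ t, ((f j).1 t - (f i).1 t).natAbs) + ∑ t, ((f i).1 t).natAbs
          = ∑ t, ((f j).1 t).natAbs := by
        rw [← Finset.sum_add_distrib]
        exact Finset.sum_congr rfl fun t _ => habs t
      omega
    have hμi : 0 < μ (f i) := by
      by_contra hcontra
      have h : μ (f i) = 0 := by omega
      apply hfne i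
      simp only [hμ_def] at h
      have h2 : (f i).2 = 0 := by omega
      have h1 : ∑ t, ((f i).1 t).natAbs = 0 := by omega
      have h1' : ∀ t ∈ Finset.univ, ((f i).1 t).natAbs = 0 :=
        Finset.sum_eq_zero_iff.1 h1
      have : (f i).1 = 0 := by
        funext t
        have := h1' t (Finset.mem_univ t)
        simp only [Pi.zero_apply]
        omega
      exact Prod.ext this h2
    omega

/-- Let `K` be a field, `v₁, …, vₛ ∈ ℤ^k`, `a₁, …, aₛ ∈ ℤ`, and let `S` be the additive
submonoid `{(u, n) ∈ ℤ^k × ℕ | ⟨u, vᵢ⟩ ≥ -n·aᵢ for all i}` of `ℤ^k × ℕ`. If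
`P₁ = {u ∈ ℝ^k | ⟨u, vᵢ⟩ ≥ -aᵢ}` is bounded, then the monoid algebra `K[S]`
is a finitely generated `K`-algebra. -/
theorem monoidAlgebra_section_ring_finiteType
    (K : Type*) [Field K] (k s : ℕ) (v : Fin s → (Fin k → ℤ)) (a : Fin s → ℤ)
    (S : AddSubmonoid ((Fin k → ℤ) × ℕ))
    (hS : (S : Set ((Fin k → ℤ) × ℕ)) =
      {p : (Fin k → ℤ) × ℕ | ∀ i, -((p.2 : ℤ) * a i) ≤ ∑ j, p.1 j * v i j})
    (hbdd : Bornology.IsBounded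
      {u : Fin k → ℝ | ∀ i, -(a i : ℝ) ≤ ∑ j, u j * (v i j : ℝ)}) :
    Algebra.FiniteType K (AddMonoidAlgebra K S) := by
  haveI : AddMonoid.FG ↥S :=
    (AddMonoid.fg_iff_addSubmonoid_fg S).mpr (aux_gordan k s v a S hS)
  infer_instance
end

section
/- Let P ⊆ ℝ^k be a bounded polytope which is the convex hull of finitely many points of ℚ^k, and let C ⊆ ℝ^{k+1} be the closed convex cone generated by P × {1} = {(u, 1) : u ∈ P}. Then C ∩ ℤ^{k+1} is a finitely generated additive monoid. -/
open Finset

/-- The coordinatewise integer-cast map as an `AddMonoidHom`. -/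
def coeZR (k : ℕ) : ((Fin k → ℤ) × ℤ) →+ ((Fin k → ℝ) × ℝ) where
  toFun z := ((fun j => (z.1 j : ℝ)), (z.2 : ℝ))
  map_zero' := by ext <;> simp
  map_add' a b := by ext <;> simp

lemma sum_pair_coords (k : ℕ) {ι' : Type*} (s : Finset ι') (c : ι' → ℝ) (p : ι' → Fin k → ℝ) :
    ∑ i ∈ s, c i • ((p i, (1 : ℝ)) : (Fin k → ℝ) × ℝ) = (∑ i ∈ s, c i • p i, ∑ i ∈ s, c i) := by
  rw [Prod.ext_iff, Prod.fst_sum, Prod.snd_sum]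
  constructor
  · refine Finset.sum_congr rfl fun i hi => ?_
    simp
  · refine Finset.sum_congr rfl fun i hi => ?_
    simp

/-- A nonnegative combination of points `(p i, 1)` with `p i ∈ P` (convex, nonempty)
is of the form `t • (q, 1)` with `t ≥ 0` and `q ∈ P`. -/
lemma aux_sum_mem {k : ℕ} {P : Set (Fin k → ℝ)} (hconv : Convex ℝ P) (hne : P.Nonempty)
    {ι' : Type*} (s : Finset ι') (c : ι' → ℝ) (p : ι' → Fin k → ℝ)
    (hc : ∀ i ∈ s, 0 ≤ c i) (hp : ∀ i ∈ s, p i ∈ P) :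
    ∃ (t : ℝ) (q : Fin k → ℝ), 0 ≤ t ∧ q ∈ P ∧
      ∑ i ∈ s, c i • ((p i, (1 : ℝ)) : (Fin k → ℝ) × ℝ) = t • (q, 1) := by
  set t := ∑ i ∈ s, c i with ht
  have ht0 : 0 ≤ t := Finset.sum_nonneg hc
  rw [sum_pair_coords]
  rcases eq_or_lt_of_le ht0 with h0 | hpos
  · obtain ⟨q, hq⟩ := hne
    refine ⟨0, q, le_refl _, hq, ?_⟩
    have hz : ∀ i ∈ s, c i = 0 := fun i hi =>
      (Finset.sum_eq_zero_iff_of_nonneg hc).mp h0.symm i hi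
    rw [zero_smul, Prod.ext_iff]
    constructor
    · exact Finset.sum_eq_zero fun i hi => by rw [hz i hi, zero_smul]
    · exact Finset.sum_eq_zero hz
  · refine ⟨t, ∑ i ∈ s, (c i / t) • p i, ht0, ?_, ?_⟩
    · refine hconv.sum_mem (fun i hi => div_nonneg (hc i hi) ht0) ?_ hp
      rw [← Finset.sum_div, ← ht, div_self hpos.ne']
    · rw [Prod.ext_iff, Prod.smul_fst, Prod.smul_snd]
      refine ⟨?_, by simp [ht]⟩
      rw [Finset.smul_sum]
      refine Finset.sum_congr rfl fun i hi => ?_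
      rw [smul_smul, mul_div_cancel₀ _ hpos.ne']

/-- The cone over a compact set is closed. -/
lemma aux_closed {k : ℕ} {P : Set (Fin k → ℝ)} (hcpt : IsCompact P) :
    IsClosed {x : (Fin k → ℝ) × ℝ | ∃ (t : ℝ) (p : Fin k → ℝ), 0 ≤ t ∧ p ∈ P ∧
      x = t • ((p, (1 : ℝ)) : (Fin k → ℝ) × ℝ)} := by
  rcases P.eq_empty_or_nonempty with hPe | hne
  · convert isClosed_empty
    simp [hPe]
  apply IsSeqClosed.isClosed
  intro x a hx hlim
  choose t p htp using hx
  have h2 : Filter.Tendsto (fun n => (x n).2) Filter.atTop (nhds a.2) :=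
    (continuous_snd.tendsto a).comp hlim
  have hx2 : ∀ n, (x n).2 = t n := by
    intro n
    rw [(htp n).2.2]
    simp
  have h2' : Filter.Tendsto t Filter.atTop (nhds a.2) := by
    simpa [hx2] using h2
  have ht0 : 0 ≤ a.2 := ge_of_tendsto' h2 (fun n => by rw [hx2]; exact (htp n).1)
  obtain ⟨q, hq, φ, hφ, hqlim⟩ := hcpt.tendsto_subseq (fun n => (htp n).2.1)
  refine ⟨a.2, q, ht0, hq, ?_⟩
  have hlim1 : Filter.Tendsto (fun n => (x (φ n)).1) Filter.atTop (nhds a.1) :=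
    (continuous_fst.tendsto a).comp (hlim.comp hφ.tendsto_atTop)
  have hlim1' : Filter.Tendsto (fun n => (x (φ n)).1) Filter.atTop (nhds (a.2 • q)) := by
    have hts : Filter.Tendsto (fun n => t (φ n)) Filter.atTop (nhds a.2) :=
      h2'.comp hφ.tendsto_atTop
    have hmain : Filter.Tendsto (fun n => t (φ n) • p (φ n)) Filter.atTop (nhds (a.2 • q)) :=
      hts.smul hqlim
    convert hmain using 2 with n
    rw [(htp (φ n)).2.2]
    simp
  have h1 : a.1 = a.2 • q := tendsto_nhds_unique hlim1 hlim1'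
  rw [Prod.ext_iff, Prod.smul_fst, Prod.smul_snd]
  exact ⟨h1, by simp⟩

lemma rat_clear_denom {r : ℚ} {d : ℕ} (hdvd : r.den ∣ d) :
    ((r.num * ((d / r.den : ℕ) : ℤ) : ℤ) : ℝ) = (d : ℝ) * (r : ℝ) := by
  have h : ((r.num * ((d / r.den : ℕ) : ℤ) : ℤ) : ℚ) = (d : ℚ) * r := by
    have hd : (d : ℚ) = (r.den : ℚ) * ((d / r.den : ℕ) : ℚ) := by
      exact_mod_cast (Nat.mul_div_cancel' hdvd).symm
    have hnum : (r : ℚ) * (r.den : ℚ) = (r.num : ℚ) := Rat.mul_den_eq_num r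
    rw [hd, Int.cast_mul, Int.cast_natCast, ← hnum]
    ring
  have h2 := congrArg (fun x : ℚ => (x : ℝ)) h
  simp only [Rat.cast_intCast, Rat.cast_mul, Rat.cast_natCast] at h2
  exact h2

/-- Let `P ⊆ ℝ^k` be a bounded polytope which is the convex hull of finitely many
points of `ℚ^k`, and let `C ⊆ ℝ^{k+1} = ℝ^k × ℝ` be the closed convex cone generated
by `P × {1}` (the closure of the set of finite nonnegative combinations of elements
of `P × {1}`). Then `C ∩ ℤ^{k+1}` is a finitely generated additive monoid. -/
theorem closed_cone_over_rational_polytope_lattice_points_fg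
    (k : ℕ) (V : Finset (Fin k → ℚ))
    (P : Set (Fin k → ℝ))
    (hP : P = convexHull ℝ ((fun q : Fin k → ℚ => fun j => (q j : ℝ)) '' ↑V))
    (C : Set ((Fin k → ℝ) × ℝ))
    (hC : C = closure {x | ∃ (m : ℕ) (c : Fin m → ℝ) (p : Fin m → (Fin k → ℝ)),
      (∀ i, 0 ≤ c i) ∧ (∀ i, p i ∈ P) ∧ x = ∑ i, c i • (p i, (1 : ℝ))}) :
    ∃ T : Finset ((Fin k → ℤ) × ℤ),
      {z : (Fin k → ℤ) × ℤ | ((fun j => (z.1 j : ℝ)), (z.2 : ℝ)) ∈ C} =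
        ↑(AddSubmonoid.closure (T : Set ((Fin k → ℤ) × ℤ))) := by
  set f : (Fin k → ℚ) → (Fin k → ℝ) := fun q => fun j => (q j : ℝ) with hf
  rcases V.eq_empty_or_nonempty with hVe | ⟨v0, hv0⟩
  · -- empty case: C = {0}
    subst hVe
    have hPe : P = ∅ := by
      rw [hP]; simp
    have hC0 : C = {0} := by
      rw [hC]
      have : {x : (Fin k → ℝ) × ℝ | ∃ (m : ℕ) (c : Fin m → ℝ) (p : Fin m → (Fin k → ℝ)),
          (∀ i, 0 ≤ c i) ∧ (∀ i, p i ∈ P) ∧ x = ∑ i, c i • (p i, (1 : ℝ))} = {0} := by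
        ext x
        simp only [Set.mem_setOf_eq, Set.mem_singleton_iff]
        constructor
        · rintro ⟨m, c, p, hc, hp, rfl⟩
          rcases Nat.eq_zero_or_pos m with rfl | hm
          · simp
          · exact absurd (hp ⟨0, hm⟩) (by rw [hPe]; simp)
        · rintro rfl
          exact ⟨0, fun i => 0, fun i => 0, fun i => le_refl _, fun i => i.elim0, by simp⟩
      rw [this, closure_singleton]
    refine ⟨∅, ?_⟩
    ext z
    simp only [Set.mem_setOf_eq, hC0, Set.mem_singleton_iff, Finset.coe_empty,
      AddSubmonoid.closure_empty, AddSubmonoid.coe_bot]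
    constructor
    · intro h
      rw [Prod.ext_iff] at h
      obtain ⟨h1, h2⟩ := h
      refine Prod.ext_iff.mpr ⟨funext fun j => ?_, ?_⟩
      · have h1j := congrFun h1 j
        simp only [Prod.fst_zero, Pi.zero_apply] at h1j ⊢
        exact_mod_cast h1j
      · simp only [Prod.snd_zero] at h2 ⊢
        exact_mod_cast h2
    · rintro rfl
      exact Prod.ext_iff.mpr ⟨funext fun j => by simp, by simp⟩
  · -- nonempty case
    have hPconv : Convex ℝ P := hP ▸ convex_convexHull ℝ _
    have hVim : (fun q : Fin k → ℚ => fun j => (q j : ℝ)) '' ↑V = ↑(V.image f) := by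
      rw [Finset.coe_image]
    have hfv0 : f v0 ∈ P := by
      rw [hP]
      exact subset_convexHull ℝ _ ⟨v0, hv0, rfl⟩
    have hPne : P.Nonempty := ⟨f v0, hfv0⟩
    have hPcpt : IsCompact P := by
      rw [hP]
      exact (V.finite_toSet.image _).isCompact_convexHull (𝕜 := ℝ)
    set S : Set ((Fin k → ℝ) × ℝ) := {x | ∃ (t : ℝ) (p : Fin k → ℝ), 0 ≤ t ∧ p ∈ P ∧
      x = t • ((p, (1 : ℝ)) : (Fin k → ℝ) × ℝ)} with hS
    have hCS : C = S := by
      rw [hC]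
      have h1 : {x : (Fin k → ℝ) × ℝ | ∃ (m : ℕ) (c : Fin m → ℝ) (p : Fin m → (Fin k → ℝ)),
          (∀ i, 0 ≤ c i) ∧ (∀ i, p i ∈ P) ∧ x = ∑ i, c i • (p i, (1 : ℝ))} = S := by
        ext x
        simp only [Set.mem_setOf_eq, hS]
        constructor
        · rintro ⟨m, c, p, hc, hp, rfl⟩
          obtain ⟨t, q, ht, hq, heq⟩ := aux_sum_mem hPconv hPne Finset.univ c p
            (fun i _ => hc i) (fun i _ => hp i)
          exact ⟨t, q, ht, hq, heq⟩
        · rintro ⟨t, p, ht, hp, rfl⟩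
          exact ⟨1, fun _ => t, fun _ => p, fun _ => ht, fun _ => hp,
            by rw [Fin.sum_univ_one]⟩
      rw [h1, (aux_closed hPcpt).closure_eq]
    -- set up integer generators
    set d : ℕ := ∏ q ∈ V, ∏ j, (q j).den with hd
    have hd0 : 0 < d := Finset.prod_pos fun q _ => Finset.prod_pos fun j _ => (q j).pos
    have hdR : (0 : ℝ) < d := by exact_mod_cast hd0
    set W : (Fin k → ℚ) → ((Fin k → ℤ) × ℤ) :=
      fun q => ((fun j => (q j).num * ((d / (q j).den : ℕ) : ℤ)), (d : ℤ)) with hWdef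
    have hW : ∀ q ∈ V, coeZR k (W q) = (d : ℝ) • ((f q, (1 : ℝ)) : (Fin k → ℝ) × ℝ) := by
      intro q hq
      have hdvd : ∀ j, (q j).den ∣ d := by
        intro j
        have h1 : (q j).den ∣ ∏ j', (q j').den :=
          Finset.dvd_prod_of_mem (fun j' => (q j').den) (Finset.mem_univ j)
        have h2 : (∏ j', (q j').den) ∣ d :=
          Finset.dvd_prod_of_mem (fun q' => ∏ j', (q' j').den) hq
        exact dvd_trans h1 h2
      refine Prod.ext_iff.mpr ⟨funext fun j => ?_, ?_⟩
      · exact (rat_clear_denom (hdvd j)).trans (by simp [Prod.smul_fst, hf])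
      · simp [coeZR, hWdef]
    set K : Set ((Fin k → ℝ) × ℝ) := {x | ∃ μ : (Fin k → ℚ) → ℝ,
      (∀ q ∈ V, 0 ≤ μ q ∧ μ q ≤ 1) ∧ x = ∑ q ∈ V, μ q • coeZR k (W q)} with hK
    have hKS : K ⊆ S := by
      rintro x ⟨μ, hμ, rfl⟩
      have hrw : ∀ q ∈ V, μ q • coeZR k (W q) = (μ q * d) • ((f q, (1 : ℝ)) : (Fin k → ℝ) × ℝ) :=
        fun q hq => by rw [hW q hq, smul_smul]
      rw [Finset.sum_congr rfl hrw]
      obtain ⟨t, p, ht, hp, heq⟩ := aux_sum_mem hPconv hPne V (fun q => μ q * d) f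
        (fun q hq => mul_nonneg (hμ q hq).1 hdR.le)
        (fun q hq => hP ▸ subset_convexHull ℝ _ ⟨q, hq, rfl⟩)
      exact ⟨t, p, ht, hp, heq⟩
    -- finiteness of lattice points in K
    set B : ℝ := ∑ q ∈ V, ‖coeZR k (W q)‖ with hB
    set N : ℤ := ⌈B⌉ with hN
    have hKbound : ∀ x ∈ K, ‖x‖ ≤ B := by
      rintro x ⟨μ, hμ, rfl⟩
      refine le_trans (norm_sum_le _ _) (Finset.sum_le_sum fun q hq => ?_)
      rw [norm_smul, Real.norm_eq_abs, abs_of_nonneg (hμ q hq).1]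
      exact mul_le_of_le_one_left (norm_nonneg _) (hμ q hq).2
    have hcoordb : ∀ z : (Fin k → ℤ) × ℤ, coeZR k z ∈ K →
        (∀ j, -N ≤ z.1 j ∧ z.1 j ≤ N) ∧ (-N ≤ z.2 ∧ z.2 ≤ N) := by
      intro z hz
      have h1 : ∀ j, |(z.1 j : ℝ)| ≤ B := by
        intro j
        calc |(z.1 j : ℝ)| = ‖(coeZR k z).1 j‖ := rfl
          _ ≤ ‖(coeZR k z).1‖ := norm_le_pi_norm _ j
          _ ≤ ‖coeZR k z‖ := norm_fst_le _
          _ ≤ B := hKbound _ hz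
      have h2 : |(z.2 : ℝ)| ≤ B := by
        calc |(z.2 : ℝ)| = ‖(coeZR k z).2‖ := rfl
          _ ≤ ‖coeZR k z‖ := norm_snd_le _
          _ ≤ B := hKbound _ hz
      have hBN : B ≤ (N : ℝ) := Int.le_ceil B
      constructor
      · intro j
        obtain ⟨ha, hb⟩ := abs_le.mp (le_trans (h1 j) hBN)
        exact ⟨by exact_mod_cast ha, by exact_mod_cast hb⟩
      · obtain ⟨ha, hb⟩ := abs_le.mp (le_trans h2 hBN)
        exact ⟨by exact_mod_cast ha, by exact_mod_cast hb⟩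
    have Tfin : {z : (Fin k → ℤ) × ℤ | coeZR k z ∈ K}.Finite := by
      classical
      refine Set.Finite.subset ((Set.finite_Icc (fun _ => -N) (fun _ => N)).prod
        (Set.finite_Icc (-N) N)) ?_
      intro z hz
      obtain ⟨h1, h2⟩ := hcoordb z hz
      refine Set.mem_prod.mpr ⟨?_, ?_⟩
      · exact Set.mem_Icc.mpr ⟨fun j => (h1 j).1, fun j => (h1 j).2⟩
      · exact Set.mem_Icc.mpr h2
    set T : Finset ((Fin k → ℤ) × ℤ) := Tfin.toFinset with hT
    have hTK : ∀ z, z ∈ T ↔ coeZR k z ∈ K := fun z => Tfin.mem_toFinset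
    -- W q ∈ T for q ∈ V
    have hWT : ∀ q ∈ V, W q ∈ T := by
      intro q hq
      rw [hTK]
      classical
      refine ⟨fun q' => if q' = q then 1 else 0, fun q' _ => ?_, ?_⟩
      · dsimp only
        split <;> norm_num
      · show coeZR k (W q) = ∑ q' ∈ V, (if q' = q then (1 : ℝ) else 0) • coeZR k (W q')
        have hterm : ∀ q' ∈ V, (if q' = q then (1 : ℝ) else 0) • coeZR k (W q') =
            (if q' = q then coeZR k (W q') else 0) := by
          intro q' _
          split <;> simp
        rw [Finset.sum_congr rfl hterm, Finset.sum_ite_eq' V q (fun q' => coeZR k (W q')),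
          if_pos hq]
    -- the monoid of lattice points of S
    set L : AddSubmonoid ((Fin k → ℤ) × ℤ) :=
      { carrier := {z | coeZR k z ∈ S}
        zero_mem' := ⟨0, f v0, le_refl _, hfv0, by rw [map_zero, zero_smul]⟩
        add_mem' := by
          rintro a b ⟨t, p, ht, hp, heqa⟩ ⟨s, q2, hs, hq2, heqb⟩
          obtain ⟨u, w2, hu, hw2, heq⟩ := aux_sum_mem hPconv hPne (Finset.univ : Finset (Fin 2))
            ![t, s] ![p, q2] (by intro i _; fin_cases i <;> simpa) (by intro i _; fin_cases i <;> simpa)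
          refine ⟨u, w2, hu, hw2, ?_⟩
          rw [map_add, heqa, heqb, ← heq, Fin.sum_univ_two]
          simp } with hL
    have hfinj : Function.Injective f := by
      intro q q' h
      funext j
      exact Rat.cast_injective (congrFun h j)
    refine ⟨T, ?_⟩
    have hgoal : ∀ z : (Fin k → ℤ) × ℤ,
        (((fun j => ((z.1 j : ℤ) : ℝ)), ((z.2 : ℤ) : ℝ)) : (Fin k → ℝ) × ℝ) = coeZR k z :=
      fun z => rfl
    ext z
    simp only [Set.mem_setOf_eq, SetLike.mem_coe, hgoal, hCS]
    constructor
    · rintro ⟨t, p, ht, hp, heq⟩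
      have hp' : p ∈ convexHull ℝ ((V.image f : Finset (Fin k → ℝ)) : Set (Fin k → ℝ)) := by
        rw [← hVim, ← hP]
        exact hp
      obtain ⟨w, hw0, hw1, hwp⟩ := Finset.mem_convexHull'.mp hp'
      have hinj : ∀ x ∈ V, ∀ y ∈ V, f x = f y → x = y := fun x _ y _ h => hfinj h
      have hwV : ∑ q ∈ V, w (f q) = 1 := by
        rw [← Finset.sum_image (f := w) hinj]; exact hw1
      have hwpV : ∑ q ∈ V, w (f q) • f q = p := by
        rw [← Finset.sum_image (f := fun y => w y • y) hinj]; exact hwp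
      set c : (Fin k → ℚ) → ℝ := fun q => t * w (f q) with hc
      have hcnn : ∀ q ∈ V, 0 ≤ c q :=
        fun q hq => mul_nonneg ht (hw0 _ (Finset.mem_image_of_mem f hq))
      have hsum1 : coeZR k z = ∑ q ∈ V, c q • ((f q, (1 : ℝ)) : (Fin k → ℝ) × ℝ) := by
        rw [heq, sum_pair_coords]
        refine Prod.ext_iff.mpr ⟨?_, ?_⟩
        · show t • p = ∑ q ∈ V, c q • f q
          rw [← hwpV, Finset.smul_sum]
          exact Finset.sum_congr rfl fun q hq => smul_smul t (w (f q)) (f q)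
        · show t • (1 : ℝ) = ∑ q ∈ V, c q
          rw [smul_eq_mul, mul_one]
          calc t = t * ∑ q ∈ V, w (f q) := by rw [hwV, mul_one]
            _ = ∑ q ∈ V, c q := by rw [Finset.mul_sum]
      have hsum2 : coeZR k z = ∑ q ∈ V, (c q / d) • coeZR k (W q) := by
        rw [hsum1]
        refine Finset.sum_congr rfl fun q hq => ?_
        rw [hW q hq, smul_smul, div_mul_cancel₀ _ hdR.ne']
      set n : (Fin k → ℚ) → ℕ := fun q => ⌊c q / d⌋₊ with hn
      set r : (Fin k → ℤ) × ℤ := z - ∑ q ∈ V, n q • W q with hr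
      have hrK : coeZR k r ∈ K := by
        refine ⟨fun q => c q / d - n q, fun q hq => ⟨?_, ?_⟩, ?_⟩
        · simp only [hn]
          exact sub_nonneg.mpr (Nat.floor_le (div_nonneg (hcnn q hq) hdR.le))
        · simp only [hn]
          have hlt := Nat.lt_floor_add_one (c q / d)
          linarith
        · rw [hr, map_sub, map_sum, hsum2, ← Finset.sum_sub_distrib]
          refine Finset.sum_congr rfl fun q hq => ?_
          rw [map_nsmul, ← Nat.cast_smul_eq_nsmul ℝ, ← sub_smul]
      have hrT : r ∈ T := (hTK r).mpr hrK
      have hzeq : z = (∑ q ∈ V, n q • W q) + r := by rw [hr]; abel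
      rw [hzeq]
      exact AddSubmonoid.add_mem _
        (AddSubmonoid.sum_mem _ fun q hq => AddSubmonoid.nsmul_mem _
          (AddSubmonoid.subset_closure (hWT q hq)) _)
        (AddSubmonoid.subset_closure hrT)
    · intro hz
      have hle : AddSubmonoid.closure (T : Set ((Fin k → ℤ) × ℤ)) ≤ L :=
        AddSubmonoid.closure_le.mpr fun x hx => hKS ((hTK x).mp hx)
      exact hle hz
end

section
/- Let v_1, …, v_s ∈ ℤ^k and a_1, …, a_s ∈ ℤ, and for each integer n ≥ 0 set P_n = {u ∈ ℝ^k : ⟨u, v_i⟩ ≥ −n·a_i for all i = 1, …, s}. Assume P_1 is bounded, so each set P_n ∩ ℤ^k is finite. Then the generating function ∑_{n ≥ 0} card(P_n ∩ ℤ^k) · t^n is a rational power series: there exist polynomials p(t), q(t) ∈ ℚ[t] with q(0) ≠ 0 such that q(t) · ∑_{n ≥ 0} card(P_n ∩ ℤ^k) · t^n = p(t) as formal power series over ℚ. -/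
open Finset

namespace LatticeGFAux

open scoped Classical


/-- weighted degree of an exponent vector -/
def wdeg {r : ℕ} (d : Fin r → ℕ) (c : Fin r → ℕ) : ℕ := ∑ l, c l * d l

lemma wdeg_add {r : ℕ} (d c c' : Fin r → ℕ) :
    wdeg d (c + c') = wdeg d c + wdeg d c' := by
  simp [wdeg, add_mul, Finset.sum_add_distrib]

lemma wdeg_mono {r : ℕ} (d : Fin r → ℕ) {c c' : Fin r → ℕ} (h : c ≤ c') :
    wdeg d c ≤ wdeg d c' :=
  Finset.sum_le_sum fun l _ => Nat.mul_le_mul_right _ (h l)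

def TS {r : ℕ} (d : Fin r → ℕ) (n : ℕ) : Finset (Fin r → ℕ) :=
  (Fintype.piFinset fun _ => Finset.range (n + 1)).filter fun c => wdeg d c = n

lemma mem_TS {r : ℕ} {d : Fin r → ℕ} (hd : ∀ l, 1 ≤ d l) {n : ℕ} {c : Fin r → ℕ} :
    c ∈ TS d n ↔ wdeg d c = n := by
  constructor
  · exact fun h => (Finset.mem_filter.1 h).2
  · intro h
    refine Finset.mem_filter.2 ⟨Fintype.mem_piFinset.2 fun l => Finset.mem_range.2 ?_, h⟩
    have h1 : c l * 1 ≤ c l * d l := Nat.mul_le_mul_left _ (hd l)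
    have h2 : c l * d l ≤ wdeg d c :=
      Finset.single_le_sum (f := fun l => c l * d l) (fun _ _ => Nat.zero_le _)
        (Finset.mem_univ l)
    rw [mul_one] at h1
    rw [h] at h2
    omega

def NS {r : ℕ} (d : Fin r → ℕ) (n : ℕ) : ℕ := (TS d n).card

lemma wdeg_succ {r : ℕ} (d : Fin (r+1) → ℕ) (c : Fin (r+1) → ℕ) :
    wdeg d c = c 0 * d 0 + wdeg (d ∘ Fin.succ) (Fin.tail c) := by
  simp [wdeg, Fin.sum_univ_succ, Fin.tail]

lemma NS_succ {r : ℕ} (d : Fin (r+1) → ℕ) (hd : ∀ l, 1 ≤ d l) (n : ℕ) :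
    NS d n = NS (d ∘ Fin.succ) n + if d 0 ≤ n then NS d (n - d 0) else 0 := by
  classical
  have hd' : ∀ l, 1 ≤ (d ∘ Fin.succ) l := fun l => hd _
  have hsplit := Finset.card_filter_add_card_filter_not
    (s := TS d n) (p := fun c => c 0 = 0)
  rw [NS, ← hsplit]
  clear hsplit
  congr 1
  · -- c 0 = 0 part equals NS (d∘succ) n
    refine Finset.card_bij (fun c _ => Fin.tail c) ?_ ?_ ?_
    · rintro c hc
      obtain ⟨hc1, hc2⟩ := Finset.mem_filter.1 hc
      rw [mem_TS hd] at hc1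
      rw [mem_TS hd']
      rw [wdeg_succ, hc2, zero_mul, zero_add] at hc1
      exact hc1
    · rintro c hc c' hc' h
      obtain ⟨hc1, hc2⟩ := Finset.mem_filter.1 hc
      obtain ⟨hc1', hc2'⟩ := Finset.mem_filter.1 hc'
      have h' : Fin.tail c = Fin.tail c' := h
      have : Fin.cons (c 0) (Fin.tail c) = Fin.cons (c' 0) (Fin.tail c') := by
        rw [h', hc2, hc2']
      rwa [Fin.cons_self_tail, Fin.cons_self_tail] at this
    · intro c' hc'
      rw [mem_TS hd'] at hc'
      refine ⟨Fin.cons 0 c', Finset.mem_filter.2 ⟨(mem_TS hd).2 ?_, by simp⟩, ?_⟩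
      · rw [wdeg_succ]
        simp [Fin.tail_cons, hc']
      · simp [Fin.tail_cons]
  · -- c 0 ≠ 0 part
    split_ifs with hle
    · refine Finset.card_bij (fun c _ => Fin.cons (c 0 - 1) (Fin.tail c)) ?_ ?_ ?_
      · rintro c hc
        obtain ⟨hc1, hc2⟩ := Finset.mem_filter.1 hc
        rw [mem_TS hd] at hc1
        rw [mem_TS hd, wdeg_succ]
        simp only [Fin.cons_zero, Fin.tail_cons]
        rw [wdeg_succ] at hc1
        have h0 : 1 ≤ c 0 := Nat.one_le_iff_ne_zero.2 hc2
        rw [Nat.sub_mul, one_mul]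
        have hdd : d 0 ≤ c 0 * d 0 := Nat.le_mul_of_pos_left _ h0
        generalize hA : c 0 * d 0 = A at hc1 hdd
        omega
      · rintro c hc c' hc' h
        obtain ⟨hc1, hc2⟩ := Finset.mem_filter.1 hc
        obtain ⟨hc1', hc2'⟩ := Finset.mem_filter.1 hc'
        have h0 : Fin.cons (c 0 - 1) (Fin.tail c) 0 = Fin.cons (c' 0 - 1) (Fin.tail c') 0 :=
          congrFun h 0
        simp only [Fin.cons_zero] at h0
        have ht : Fin.tail c = Fin.tail c' := by
          funext l
          have := congrFun h l.succ
          simpa [Fin.cons_succ] using this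
        have hcc : c 0 = c' 0 := by
          have h1 : 1 ≤ c 0 := Nat.one_le_iff_ne_zero.2 hc2
          have h1' : 1 ≤ c' 0 := Nat.one_le_iff_ne_zero.2 hc2'
          omega
        have : Fin.cons (c 0) (Fin.tail c) = Fin.cons (c' 0) (Fin.tail c') := by
          rw [hcc, ht]
        rwa [Fin.cons_self_tail, Fin.cons_self_tail] at this
      · intro c' hc'
        rw [mem_TS hd, wdeg_succ] at hc'
        refine ⟨Fin.cons (c' 0 + 1) (Fin.tail c'),
          Finset.mem_filter.2 ⟨(mem_TS hd).2 ?_, by simp⟩, ?_⟩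
        · rw [wdeg_succ]
          simp only [Fin.cons_zero, Fin.tail_cons]
          rw [add_mul, one_mul]
          generalize hA : c' 0 * d 0 = A at hc'
          omega
        · simp only [Fin.cons_zero, Fin.tail_cons]
          rw [Nat.add_sub_cancel, Fin.cons_self_tail]
    · -- filter is empty
      have hemp : Finset.filter (fun c => ¬ c 0 = 0) (TS d n) = ∅ := by
        rw [Finset.filter_eq_empty_iff]
        intro c hc
        rw [mem_TS hd, wdeg_succ] at hc
        intro h0
        have h1 : 1 ≤ c 0 := Nat.one_le_iff_ne_zero.2 h0
        have hdd : d 0 ≤ c 0 * d 0 := Nat.le_mul_of_pos_left _ h1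
        generalize hA : c 0 * d 0 = A at hc hdd
        omega
      rw [hemp, Finset.card_empty]

lemma series_inv : ∀ (r : ℕ) (d : Fin r → ℕ), (∀ l, 1 ≤ d l) →
    (∏ l, (1 - (PowerSeries.X : PowerSeries ℚ) ^ (d l))) *
      PowerSeries.mk (fun n => (NS d n : ℚ)) = 1 := by
  intro r
  induction r with
  | zero =>
    intro d _
    rw [Finset.univ_eq_empty, Finset.prod_empty, one_mul]
    ext n
    rw [PowerSeries.coeff_mk, PowerSeries.coeff_one]
    have : NS d n = if n = 0 then 1 else 0 := by
      rcases Nat.eq_zero_or_pos n with rfl | hn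
      · rw [if_pos rfl, NS]
        apply le_antisymm
        · exact Finset.card_le_one.2 fun a _ b _ => funext fun l => l.elim0
        · have hmem : (fun l : Fin 0 => 0) ∈ TS d 0 := by
            refine (mem_TS fun l => l.elim0).2 ?_
            simp [wdeg]
          exact Finset.card_pos.2 ⟨_, hmem⟩
      · rw [if_neg (by omega), NS, Finset.card_eq_zero, Finset.eq_empty_iff_forall_notMem]
        intro c hc
        rw [mem_TS (fun l => l.elim0)] at hc
        simp [wdeg] at hc
        omega
    rw [this]
    split_ifs <;> simp
  | succ r ih =>
    intro d hd
    have key : (1 - (PowerSeries.X : PowerSeries ℚ) ^ (d 0)) *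
        PowerSeries.mk (fun n => (NS d n : ℚ)) =
        PowerSeries.mk (fun n => (NS (d ∘ Fin.succ) n : ℚ)) := by
      ext n
      rw [sub_mul, one_mul, map_sub, PowerSeries.coeff_mk, PowerSeries.coeff_mk,
        PowerSeries.coeff_X_pow_mul']
      rw [NS_succ d hd n]
      split_ifs with h
      · rw [PowerSeries.coeff_mk]
        push_cast
        ring
      · push_cast
        ring
    calc (∏ l, (1 - (PowerSeries.X : PowerSeries ℚ) ^ (d l))) *
          PowerSeries.mk (fun n => (NS d n : ℚ))
        = (∏ l : Fin r, (1 - (PowerSeries.X : PowerSeries ℚ) ^ ((d ∘ Fin.succ) l))) *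
          ((1 - (PowerSeries.X : PowerSeries ℚ) ^ (d 0)) *
            PowerSeries.mk (fun n => (NS d n : ℚ))) := by
          rw [Fin.prod_univ_succ]
          simp only [Function.comp_apply]
          ring
      _ = 1 := by rw [key]; exact ih (d ∘ Fin.succ) (fun l => hd _)


section Key

variable {X : Type*} [AddCommMonoid X] {r : ℕ} (g : Fin r → X)

/-- the canonical evaluation map -/
def phi (c : Fin r → ℕ) : X := ∑ l, c l • g l

lemma phi_add (c c' : Fin r → ℕ) : phi g (c + c') = phi g c + phi g c' := by
  simp [phi, add_smul, Finset.sum_add_distrib]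

lemma phi_mem (c : Fin r → ℕ) :
    phi g c ∈ AddSubmonoid.closure (Set.range g) :=
  AddSubmonoid.sum_mem _ fun l _ =>
    AddSubmonoid.nsmul_mem _ (AddSubmonoid.subset_closure (Set.mem_range_self l)) _

lemma deg_phi (deg : X →+ ℕ) (c : Fin r → ℕ) :
    deg (phi g c) = wdeg (fun l => deg (g l)) c := by
  simp [phi, wdeg, map_sum, map_nsmul, smul_eq_mul]

lemma exists_rep {x : X} (hx : x ∈ AddSubmonoid.closure (Set.range g)) :
    ∃ c, phi g c = x := by
  induction hx using AddSubmonoid.closure_induction with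
  | mem x hx =>
    obtain ⟨l, rfl⟩ := hx
    refine ⟨Pi.single l 1, ?_⟩
    simp [phi, Pi.single_apply, ite_smul]
  | zero => exact ⟨0, by simp [phi]⟩
  | add x y hx hy ihx ihy =>
    obtain ⟨c, rfl⟩ := ihx
    obtain ⟨c', rfl⟩ := ihy
    exact ⟨c + c', phi_add g c c'⟩

/-- translation invariance of lex order -/
lemma lex_add_right {c c' e : Fin r → ℕ} (h : toLex c < toLex c') :
    toLex (c + e) < toLex (c' + e) := by
  obtain ⟨i, hj, hi⟩ := h
  refine ⟨i, fun j hji => ?_, ?_⟩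
  · exact congrArg (· + e j) (hj j hji)
  · exact Nat.add_lt_add_right hi (e i)

lemma lex_trichotomy (c c' : Fin r → ℕ) :
    toLex c < toLex c' ∨ c = c' ∨ toLex c' < toLex c := by
  have inst : IsTrichotomous (∀ _ : Fin r, ℕ) (Pi.Lex (· < ·) (@fun _ => (· < ·))) :=
    Pi.isTrichotomous_lex _ _ (IsWellFounded.wf (r := ((· < ·) : Fin r → Fin r → Prop)))
  rcases lt_trichotomy (toLex c) (toLex c') with h | h | h
  exacts [Or.inl h, Or.inr (Or.inl (toLex.injective h)), Or.inr (Or.inr h)]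

lemma lex_wf : WellFounded (fun c c' : Fin r → ℕ => toLex c < toLex c') :=
  InvImage.wf toLex (Pi.Lex.wellFoundedLT).wf

/-- the set of lex-minimal representatives -/
def RS : Set (Fin r → ℕ) := {c | ∀ c', phi g c' = phi g c → ¬ toLex c' < toLex c}

lemma notRS_add {c : Fin r → ℕ} (h : c ∉ RS g) (e : Fin r → ℕ) : c + e ∉ RS g := by
  simp only [RS, Set.mem_setOf_eq, not_forall, not_not] at h ⊢
  obtain ⟨c', hphi, hlt⟩ := h
  refine ⟨c' + e, ?_, lex_add_right hlt⟩
  rw [phi_add, phi_add, hphi]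

lemma notRS_mono {c c'' : Fin r → ℕ} (h : c ∉ RS g) (hle : c ≤ c'') : c'' ∉ RS g := by
  have he : c'' = c + (c'' - c) := funext fun l => by
    have h2 : c l ≤ c'' l := hle l
    show c'' l = c l + (c'' l - c l)
    omega
  rw [he]
  exact notRS_add g h _

/-- minimal elements of the complement of `RS` -/
def EminS : Set (Fin r → ℕ) :=
  {c | c ∉ RS g ∧ ∀ c', c' ∉ RS g → c' ≤ c → c' = c}

lemma finite_EminS : (EminS g).Finite := by
  by_contra hinf
  have hinf' : (EminS g).Infinite := hinf
  have f := hinf'.natEmbedding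
  have hPWO : (Set.univ : Set (Fin r → ℕ)).IsPWO := Set.isPWO_of_wellQuasiOrderedLE _
  obtain ⟨e, he⟩ := hPWO.exists_monotone_subseq (f := fun n => (f n : Fin r → ℕ))
    (fun n => Set.mem_univ _)
  have h01 : ((f (e 0) : Fin r → ℕ)) ≤ (f (e 1) : Fin r → ℕ) := he (by norm_num)
  have heq : ((f (e 0) : Fin r → ℕ)) = (f (e 1) : Fin r → ℕ) :=
    (f (e 1)).2.2 _ (f (e 0)).2.1 h01
  have : f (e 0) = f (e 1) := Subtype.ext heq
  have := f.injective this
  have h01' : (e : ℕ → ℕ) 0 ≠ e 1 := by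
    intro h
    exact absurd (e.injective h) (by norm_num)
  exact h01' this

lemma cover_aux : ∀ (N : ℕ) (c : Fin r → ℕ), (∑ l, c l) ≤ N → c ∉ RS g →
    ∃ m, m ∈ EminS g ∧ m ≤ c := by
  intro N
  induction N with
  | zero =>
    intro c hsum hR
    refine ⟨c, ⟨hR, fun c' _ h2 => ?_⟩, le_rfl⟩
    have hc0 : ∀ l, c l = 0 := by
      intro l
      have h3 : c l ≤ ∑ l, c l :=
        Finset.single_le_sum (fun _ _ => Nat.zero_le _) (Finset.mem_univ l)
      omega
    funext l
    have h4 : c' l ≤ c l := h2 l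
    have h5 := hc0 l
    omega
  | succ N ihN =>
    intro c hsum hR
    by_cases hmin : ∀ c', c' ∉ RS g → c' ≤ c → c' = c
    · exact ⟨c, ⟨hR, hmin⟩, le_rfl⟩
    · push_neg at hmin
      obtain ⟨c', hc'R, hc'le, hc'ne⟩ := hmin
      obtain ⟨l0, hl0⟩ := Function.ne_iff.1 hc'ne
      have hlt : (∑ l, c' l) < ∑ l, c l :=
        Finset.sum_lt_sum (fun l _ => hc'le l)
          ⟨l0, Finset.mem_univ _, lt_of_le_of_ne (hc'le l0) hl0⟩
      obtain ⟨m, hm, hmle⟩ := ihN c' (by omega) hc'R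
      exact ⟨m, hm, hmle.trans hc'le⟩

lemma notRS_iff {c : Fin r → ℕ} :
    c ∉ RS g ↔ ∃ m ∈ (finite_EminS g).toFinset, m ≤ c := by
  constructor
  · intro h
    obtain ⟨m, hm, hle⟩ := cover_aux g (∑ l, c l) c le_rfl h
    exact ⟨m, (Set.Finite.mem_toFinset _).2 hm, hle⟩
  · rintro ⟨m, hmF, hle⟩
    have hm := (Set.Finite.mem_toFinset _).1 hmF
    exact notRS_mono g hm.1 hle


lemma card_slice (deg : X →+ ℕ) (hd : ∀ l, 1 ≤ deg (g l)) (n : ℕ) :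
    Nat.card {x : X // x ∈ AddSubmonoid.closure (Set.range g) ∧ deg x = n} =
      ((TS (fun l => deg (g l)) n).filter (· ∈ RS g)).card := by
  classical
  have hb : Function.Bijective
      (fun c : {c // c ∈ (TS (fun l => deg (g l)) n).filter (· ∈ RS g)} =>
        (⟨phi g c.1, phi_mem g c.1, by
            rw [deg_phi]
            exact (mem_TS hd).1 (Finset.mem_filter.1 c.2).1⟩ :
          {x : X // x ∈ AddSubmonoid.closure (Set.range g) ∧ deg x = n})) := by
    constructor
    · rintro ⟨c, hc⟩ ⟨c', hc'⟩ h
      simp only [Subtype.mk.injEq] at h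
      have hcR : c ∈ RS g := (Finset.mem_filter.1 hc).2
      have hc'R : c' ∈ RS g := (Finset.mem_filter.1 hc').2
      rcases lex_trichotomy c c' with h1 | h1 | h1
      · exact absurd h1 (hc'R c h)
      · exact Subtype.ext h1
      · exact absurd h1 (hcR c' h.symm)
    · rintro ⟨x, hxM, hxdeg⟩
      obtain ⟨c1, hc1⟩ := exists_rep g hxM
      have hne : {c | phi g c = x}.Nonempty := ⟨c1, hc1⟩
      have hc0 : phi g (lex_wf.min {c | phi g c = x} hne) = x :=
        lex_wf.min_mem _ hne
      have hc0R : lex_wf.min {c | phi g c = x} hne ∈ RS g := fun c' h' =>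
        lex_wf.not_lt_min _ (show c' ∈ {c | phi g c = x} from h'.trans hc0)
      refine ⟨⟨lex_wf.min {c | phi g c = x} hne,
        Finset.mem_filter.2 ⟨(mem_TS hd).2 ?_, hc0R⟩⟩, ?_⟩
      · rw [← deg_phi g deg, hc0, hxdeg]
      · exact Subtype.ext (by simpa using hc0)
  rw [Nat.card_congr (Equiv.ofBijective _ hb).symm]
  exact Nat.card_eq_finsetCard _

lemma card_shift {r' : ℕ} (dv : Fin r' → ℕ) (hd : ∀ l, 1 ≤ dv l) (m0 : Fin r' → ℕ) (n : ℕ) :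
    ((TS dv n).filter (fun c => m0 ≤ c)).card =
      if wdeg dv m0 ≤ n then NS dv (n - wdeg dv m0) else 0 := by
  classical
  split_ifs with hle
  · rw [NS]
    refine Finset.card_bij (fun c _ => c - m0) ?_ ?_ ?_
    · rintro c hc
      obtain ⟨hc1, hc2⟩ := Finset.mem_filter.1 hc
      rw [mem_TS hd] at hc1 ⊢
      have heq : (c - m0) + m0 = c := funext fun l => by
        have h2 : m0 l ≤ c l := hc2 l
        show c l - m0 l + m0 l = c l
        omega
      have hw := wdeg_add dv (c - m0) m0
      rw [heq] at hw
      show wdeg dv (c - m0) = n - wdeg dv m0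
      omega
    · rintro c hc c' hc' h
      obtain ⟨_, hc2⟩ := Finset.mem_filter.1 hc
      obtain ⟨_, hc2'⟩ := Finset.mem_filter.1 hc'
      funext l
      have h1 : c l - m0 l = c' l - m0 l := congrFun h l
      have h2 : m0 l ≤ c l := hc2 l
      have h3 : m0 l ≤ c' l := hc2' l
      omega
    · intro c' hc'
      rw [mem_TS hd] at hc'
      refine ⟨c' + m0, Finset.mem_filter.2 ⟨(mem_TS hd).2 ?_, fun l => ?_⟩, ?_⟩
      · rw [wdeg_add]
        omega
      · show m0 l ≤ c' l + m0 l
        omega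
      · funext l
        show c' l + m0 l - m0 l = c' l
        omega
  · rw [Finset.card_eq_zero, Finset.filter_eq_empty_iff]
    intro c hc
    rw [mem_TS hd] at hc
    intro hm0c
    exact hle (hc ▸ wdeg_mono dv hm0c)

lemma count_formula (deg : X →+ ℕ) (hd : ∀ l, 1 ≤ deg (g l)) (n : ℕ) :
    ((Nat.card {x : X // x ∈ AddSubmonoid.closure (Set.range g) ∧ deg x = n} : ℚ)) =
      ∑ S ∈ ((finite_EminS g).toFinset).powerset, (-1 : ℚ)^S.card *
        (if wdeg (fun l => deg (g l)) (S.sup id) ≤ n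
         then (NS (fun l => deg (g l)) (n - wdeg (fun l => deg (g l)) (S.sup id)) : ℚ)
         else 0) := by
  classical
  rw [card_slice g deg hd n, Finset.natCast_card_filter]
  have hper : ∀ c ∈ TS (fun l => deg (g l)) n, (if c ∈ RS g then (1:ℚ) else 0) =
      ∑ S ∈ ((finite_EminS g).toFinset).powerset,
        (-1:ℚ)^S.card * (if S.sup id ≤ c then 1 else 0) := by
    intro c _
    have hprod := Finset.prod_add (fun m => -(if m ≤ c then (1:ℚ) else 0)) (fun _ => (1:ℚ))
      ((finite_EminS g).toFinset)
    have hL : (∏ m ∈ (finite_EminS g).toFinset, (-(if m ≤ c then (1:ℚ) else 0) + 1))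
        = (if c ∈ RS g then (1:ℚ) else 0) := by
      by_cases hcR : c ∈ RS g
      · rw [if_pos hcR]
        refine Finset.prod_eq_one fun m hm => ?_
        rw [if_neg, neg_zero, zero_add]
        intro hmle
        exact (notRS_iff g).2 ⟨m, hm, hmle⟩ hcR
      · rw [if_neg hcR]
        obtain ⟨m, hmF, hmle⟩ := (notRS_iff g).1 hcR
        refine Finset.prod_eq_zero hmF ?_
        rw [if_pos hmle]
        exact neg_add_cancel 1
    rw [← hL, hprod]
    refine Finset.sum_congr rfl fun S _ => ?_
    rw [Finset.prod_const_one, mul_one]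
    have h1 : (∏ m ∈ S, -(if m ≤ c then (1:ℚ) else 0)) =
        (-1:ℚ)^S.card * ∏ m ∈ S, (if m ≤ c then (1:ℚ) else 0) := by
      rw [← Finset.prod_const (-1:ℚ), ← Finset.prod_mul_distrib]
      exact Finset.prod_congr rfl fun m _ => (neg_one_mul _).symm
    rw [h1, Finset.prod_boole]
    by_cases hsle : S.sup id ≤ c
    · rw [if_pos hsle,
        if_pos (show ∀ i ∈ S, i ≤ c from fun i hi =>
          le_trans (Finset.le_sup (f := id) hi) hsle)]
    · rw [if_neg hsle,
        if_neg (show ¬ ∀ i ∈ S, i ≤ c from fun hall =>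
          hsle (Finset.sup_le fun m hm => hall m hm))]
  calc (∑ c ∈ TS (fun l => deg (g l)) n, if c ∈ RS g then (1:ℚ) else 0)
      = ∑ c ∈ TS (fun l => deg (g l)) n, ∑ S ∈ ((finite_EminS g).toFinset).powerset,
          (-1:ℚ)^S.card * (if S.sup id ≤ c then 1 else 0) := Finset.sum_congr rfl hper
    _ = ∑ S ∈ ((finite_EminS g).toFinset).powerset, ∑ c ∈ TS (fun l => deg (g l)) n,
          (-1:ℚ)^S.card * (if S.sup id ≤ c then 1 else 0) := Finset.sum_comm
    _ = ∑ S ∈ ((finite_EminS g).toFinset).powerset, (-1:ℚ)^S.card *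
          ∑ c ∈ TS (fun l => deg (g l)) n, (if S.sup id ≤ c then 1 else 0) := by
        simp only [Finset.mul_sum]
    _ = ∑ S ∈ ((finite_EminS g).toFinset).powerset, (-1:ℚ)^S.card *
          (((TS (fun l => deg (g l)) n).filter (fun c => S.sup id ≤ c)).card : ℚ) := by
        refine Finset.sum_congr rfl fun S _ => ?_
        rw [Finset.natCast_card_filter]
    _ = _ := by
        refine Finset.sum_congr rfl fun S _ => ?_
        rw [card_shift (fun l => deg (g l)) hd (S.sup id) n]
        split_ifs <;> simp

theorem key (deg : X →+ ℕ) (hd : ∀ l, 1 ≤ deg (g l)) :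
    ∃ p q : Polynomial ℚ, q.coeff 0 ≠ 0 ∧
      (q : PowerSeries ℚ) * PowerSeries.mk (fun n =>
        (Nat.card {x : X // x ∈ AddSubmonoid.closure (Set.range g) ∧ deg x = n} : ℚ)) =
      (p : PowerSeries ℚ) := by
  classical
  refine ⟨∑ S ∈ ((finite_EminS g).toFinset).powerset,
      Polynomial.C ((-1:ℚ)^S.card) *
        Polynomial.X ^ (wdeg (fun l => deg (g l)) (S.sup id)),
    ∏ l, (1 - Polynomial.X ^ ((fun l => deg (g l)) l)), ?_, ?_⟩
  · have h1 : (∏ l, (1 - Polynomial.X ^ ((fun l => deg (g l)) l)) : Polynomial ℚ).coeff 0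
        = 1 := by
      rw [Polynomial.coeff_zero_eq_eval_zero, Polynomial.eval_prod]
      refine Finset.prod_eq_one fun l _ => ?_
      rw [Polynomial.eval_sub, Polynomial.eval_one, Polynomial.eval_pow, Polynomial.eval_X,
        zero_pow (show (fun l => deg (g l)) l ≠ 0 by
          show deg (g l) ≠ 0
          have := hd l
          omega), sub_zero]
    rw [h1]
    exact one_ne_zero
  · have hgser := series_inv r (fun l => deg (g l)) hd
    have hf : PowerSeries.mk (fun n =>
        (Nat.card {x : X // x ∈ AddSubmonoid.closure (Set.range g) ∧ deg x = n} : ℚ)) =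
        ∑ S ∈ ((finite_EminS g).toFinset).powerset,
          PowerSeries.C ((-1:ℚ)^S.card) *
            (PowerSeries.X ^ (wdeg (fun l => deg (g l)) (S.sup id)) *
              PowerSeries.mk (fun n => (NS (fun l => deg (g l)) n : ℚ))) := by
      ext n
      rw [PowerSeries.coeff_mk, map_sum, count_formula g deg hd n]
      refine Finset.sum_congr rfl fun S _ => ?_
      rw [PowerSeries.coeff_C_mul, PowerSeries.coeff_X_pow_mul', PowerSeries.coeff_mk]
    rw [hf, Finset.mul_sum]
    have hq : ((∏ l, (1 - Polynomial.X ^ ((fun l => deg (g l)) l)) : Polynomial ℚ) :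
        PowerSeries ℚ) = ∏ l, (1 - PowerSeries.X ^ ((fun l => deg (g l)) l)) := by
      rw [← Polynomial.coeToPowerSeries.ringHom_apply, map_prod]
      refine Finset.prod_congr rfl fun l _ => ?_
      rw [map_sub, map_one, map_pow, Polynomial.coeToPowerSeries.ringHom_apply,
        Polynomial.coe_X]
    have hterm : ∀ S ∈ ((finite_EminS g).toFinset).powerset,
        ((∏ l, (1 - Polynomial.X ^ ((fun l => deg (g l)) l)) : Polynomial ℚ) :
            PowerSeries ℚ) *
          (PowerSeries.C ((-1:ℚ)^S.card) *
            (PowerSeries.X ^ (wdeg (fun l => deg (g l)) (S.sup id)) *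
              PowerSeries.mk (fun n => (NS (fun l => deg (g l)) n : ℚ)))) =
        PowerSeries.C ((-1:ℚ)^S.card) *
          PowerSeries.X ^ (wdeg (fun l => deg (g l)) (S.sup id)) := by
      intro S _
      rw [hq]
      calc (∏ l, (1 - PowerSeries.X ^ ((fun l => deg (g l)) l))) *
            (PowerSeries.C ((-1:ℚ)^S.card) *
              (PowerSeries.X ^ (wdeg (fun l => deg (g l)) (S.sup id)) *
                PowerSeries.mk (fun n => (NS (fun l => deg (g l)) n : ℚ)))) =
          PowerSeries.C ((-1:ℚ)^S.card) *
            PowerSeries.X ^ (wdeg (fun l => deg (g l)) (S.sup id)) *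
            ((∏ l, (1 - PowerSeries.X ^ ((fun l => deg (g l)) l))) *
              PowerSeries.mk (fun n => (NS (fun l => deg (g l)) n : ℚ))) := by ring
        _ = _ := by rw [hgser, mul_one]
    rw [Finset.sum_congr rfl hterm]
    rw [← Polynomial.coeToPowerSeries.ringHom_apply, map_sum]
    refine (Finset.sum_congr rfl fun S _ => ?_).symm
    rw [Polynomial.coeToPowerSeries.ringHom_apply]
    simp only [Polynomial.coe_mul, Polynomial.coe_pow, Polynomial.coe_C, Polynomial.coe_X]

end Key

section Geom

variable {k s : ℕ} (v : Fin s → (Fin k → ℤ)) (a : Fin s → ℤ)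

/-- The monoid of pairs (n, u) with u a lattice point of n·P. -/
def Msub : AddSubmonoid (ℤ × (Fin k → ℤ)) where
  carrier := {x | 0 ≤ x.1 ∧ ∀ i, -(x.1 * a i) ≤ ∑ j, x.2 j * v i j}
  add_mem' := by
    rintro x y ⟨hx1, hx2⟩ ⟨hy1, hy2⟩
    refine ⟨by exact add_nonneg hx1 hy1, fun i => ?_⟩
    have hxi := hx2 i
    have hyi := hy2 i
    have hsum : ∑ j, (x.2 + y.2) j * v i j
        = ∑ j, x.2 j * v i j + ∑ j, y.2 j * v i j := by
      rw [← Finset.sum_add_distrib]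
      exact Finset.sum_congr rfl fun j _ => by simp [add_mul]
    show -((x.1 + y.1) * a i) ≤ ∑ j, (x.2 + y.2) j * v i j
    rw [hsum]
    have hexp : -((x.1 + y.1) * a i) = -(x.1 * a i) + -(y.1 * a i) := by ring
    rw [hexp]
    exact add_le_add hxi hyi
  zero_mem' := ⟨le_refl 0, fun i => by simp⟩

lemma mem_Msub {x : ℤ × (Fin k → ℤ)} :
    x ∈ Msub v a ↔ 0 ≤ x.1 ∧ ∀ i, -(x.1 * a i) ≤ ∑ j, x.2 j * v i j := Iff.rfl

/-- the degree homomorphism -/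
def degM : (Msub v a) →+ ℕ where
  toFun x := (x : ℤ × (Fin k → ℤ)).1.toNat
  map_zero' := rfl
  map_add' x y := by
    have hx := x.2.1
    have hy := y.2.1
    show ((x : ℤ × (Fin k → ℤ)).1 + (y : ℤ × (Fin k → ℤ)).1).toNat
      = (x : ℤ × (Fin k → ℤ)).1.toNat + (y : ℤ × (Fin k → ℤ)).1.toNat
    omega

/-- the slack values -/
def slack (x : ℤ × (Fin k → ℤ)) (i : Fin s) : ℤ :=
  ∑ j, x.2 j * v i j + x.1 * a i

lemma slack_nonneg {x : ℤ × (Fin k → ℤ)} (hx : x ∈ Msub v a) (i : Fin s) :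
    0 ≤ slack v a x i := by
  have := hx.2 i
  rw [slack]
  omega

lemma slack_add (x y : ℤ × (Fin k → ℤ)) (i : Fin s) :
    slack v a (x + y) i = slack v a x i + slack v a y i := by
  simp only [slack]
  have hsum : ∑ j, (x.2 + y.2) j * v i j
      = ∑ j, x.2 j * v i j + ∑ j, y.2 j * v i j := by
    rw [← Finset.sum_add_distrib]
    exact Finset.sum_congr rfl fun j _ => by simp [add_mul]
  show ∑ j, (x.2 + y.2) j * v i j + (x.1 + y.1) * a i = _
  rw [hsum]
  ring

/-- key analytic input: the recession cone of the bounded nonempty region is trivial -/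
lemma lineality
    (hbdd : Bornology.IsBounded
      {u : Fin k → ℝ | ∀ i, -(a i : ℝ) ≤ ∑ j, u j * (v i j : ℝ)})
    (x₀ : Fin k → ℝ) (hx₀ : ∀ i, -(a i : ℝ) ≤ ∑ j, x₀ j * (v i j : ℝ))
    (u : Fin k → ℤ) (hu : ∀ i, 0 ≤ ∑ j, u j * v i j) : u = 0 := by
  by_contra hne0
  obtain ⟨j0, hj0⟩ : ∃ j0, u j0 ≠ 0 := by
    by_contra h
    push_neg at h
    exact hne0 (funext h)
  obtain ⟨rad, hrad⟩ := hbdd.subset_closedBall 0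
  have hx₀rad : dist x₀ (0 : Fin k → ℝ) ≤ rad := by
    have := hrad (show x₀ ∈ {u : Fin k → ℝ | ∀ i, -(a i : ℝ) ≤ ∑ j, u j * (v i j : ℝ)} from hx₀)
    rwa [Metric.mem_closedBall] at this
  have hrad0 : 0 ≤ rad := le_trans dist_nonneg hx₀rad
  have hu0 : (1:ℝ) ≤ |(u j0 : ℝ)| := by
    have h1 : (1:ℤ) ≤ |u j0| := Int.one_le_abs hj0
    calc (1:ℝ) = ((1:ℤ):ℝ) := by norm_num
      _ ≤ ((|u j0| : ℤ):ℝ) := by exact_mod_cast h1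
      _ = |(u j0 : ℝ)| := by push_cast; rfl
  have huj0 : |(u j0 : ℝ)| ≠ 0 := by intro h; rw [h] at hu0; linarith
  set t : ℝ := (rad + |x₀ j0| + 1) / |(u j0 : ℝ)| with ht_def
  have ht : 0 ≤ t := by
    apply div_nonneg
    · have := abs_nonneg (x₀ j0)
      linarith
    · exact abs_nonneg _
  have hmem : (fun j => x₀ j + t * (u j : ℝ)) ∈
      {u : Fin k → ℝ | ∀ i, -(a i : ℝ) ≤ ∑ j, u j * (v i j : ℝ)} := by
    intro i
    have hsum : ∑ j, (x₀ j + t * (u j:ℝ)) * (v i j:ℝ)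
        = ∑ j, x₀ j * (v i j:ℝ) + t * ∑ j, (u j:ℝ) * (v i j:ℝ) := by
      rw [Finset.mul_sum, ← Finset.sum_add_distrib]
      exact Finset.sum_congr rfl fun j _ => by ring
    show -(a i : ℝ) ≤ ∑ j, (x₀ j + t * (u j:ℝ)) * (v i j:ℝ)
    rw [hsum]
    have h2 : (0:ℝ) ≤ ∑ j, (u j:ℝ) * (v i j:ℝ) := by
      have h3 := hu i
      have h4 : ((∑ j, u j * v i j : ℤ):ℝ) = ∑ j, (u j:ℝ) * (v i j:ℝ) := by
        push_cast
        rfl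
      rw [← h4]
      exact_mod_cast h3
    have := hx₀ i
    nlinarith [mul_nonneg ht h2]
  have hcomp : |x₀ j0 + t * (u j0:ℝ)| ≤ rad := by
    have h6 := hrad hmem
    rw [Metric.mem_closedBall] at h6
    have h7 : dist ((fun j => x₀ j + t * (u j:ℝ)) j0) ((0 : Fin k → ℝ) j0) ≤
        dist (fun j => x₀ j + t * (u j:ℝ)) (0 : Fin k → ℝ) :=
      dist_le_pi_dist (X := fun _ : Fin k => ℝ) (fun j => x₀ j + t * (u j:ℝ)) 0 j0
    have h8 : dist (x₀ j0 + t * (u j0:ℝ)) (0:ℝ) ≤ rad := le_trans h7 h6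
    rwa [Real.dist_eq, sub_zero] at h8
  have htu : t * |(u j0:ℝ)| = rad + |x₀ j0| + 1 := by
    rw [ht_def]
    field_simp
  have habs : |t * (u j0:ℝ)| = t * |(u j0:ℝ)| := by
    rw [abs_mul, abs_of_nonneg ht]
  have hlow : t * |(u j0:ℝ)| - |x₀ j0| ≤ |x₀ j0 + t * (u j0:ℝ)| := by
    have := abs_add_le (x₀ j0) (t * (u j0:ℝ))
    have h5 : |t * (u j0:ℝ)| - |x₀ j0| ≤ |x₀ j0 + t * (u j0:ℝ)| := by
      have := abs_sub_abs_le_abs_sub (t * (u j0:ℝ)) (-(x₀ j0))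
      rw [abs_neg, sub_neg_eq_add] at this
      have hcomm : t * (u j0:ℝ) + x₀ j0 = x₀ j0 + t * (u j0:ℝ) := by ring
      rw [hcomm] at this
      linarith
    rw [habs] at h5
    exact h5
  rw [htu] at hlow
  linarith


/-- comparison vector in `ℕ^(s+1)` -/
def psi (x : Msub v a) : Fin (s+1) → ℕ :=
  Fin.cons (degM v a x) (fun i => (slack v a (x : ℤ × (Fin k → ℤ)) i).toNat)

lemma sub_mem {x y : Msub v a} (h : psi v a x ≤ psi v a y) :
    ((y : ℤ × (Fin k → ℤ)) - (x : ℤ × (Fin k → ℤ))) ∈ Msub v a := by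
  have h0 : psi v a x 0 ≤ psi v a y 0 := h 0
  simp only [psi, Fin.cons_zero] at h0
  have hx1 := x.2.1
  have hy1 := y.2.1
  have hdle : (x : ℤ × (Fin k → ℤ)).1 ≤ (y : ℤ × (Fin k → ℤ)).1 := by
    have h0' : (x : ℤ × (Fin k → ℤ)).1.toNat ≤ (y : ℤ × (Fin k → ℤ)).1.toNat := h0
    omega
  constructor
  · show 0 ≤ ((y : ℤ × (Fin k → ℤ)) - (x : ℤ × (Fin k → ℤ))).1
    show 0 ≤ (y : ℤ × (Fin k → ℤ)).1 - (x : ℤ × (Fin k → ℤ)).1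
    omega
  · intro i
    have hi : psi v a x i.succ ≤ psi v a y i.succ := h i.succ
    simp only [psi, Fin.cons_succ] at hi
    have hsx := slack_nonneg v a x.2 i
    have hsy := slack_nonneg v a y.2 i
    have hsle : slack v a (x : ℤ × (Fin k → ℤ)) i ≤ slack v a (y : ℤ × (Fin k → ℤ)) i := by
      omega
    have hsub : ∑ j, ((y : ℤ × (Fin k → ℤ)).2 - (x : ℤ × (Fin k → ℤ)).2) j * v i j
        = ∑ j, (y : ℤ × (Fin k → ℤ)).2 j * v i j
          - ∑ j, (x : ℤ × (Fin k → ℤ)).2 j * v i j := by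
      rw [← Finset.sum_sub_distrib]
      exact Finset.sum_congr rfl fun j _ => by simp [sub_mul]
    show -((((y : ℤ × (Fin k → ℤ)).1 - (x : ℤ × (Fin k → ℤ)).1)) * a i)
        ≤ ∑ j, (((y : ℤ × (Fin k → ℤ)).2 - (x : ℤ × (Fin k → ℤ)).2)) j * v i j
    rw [hsub]
    have ex : slack v a (x : ℤ × (Fin k → ℤ)) i
        = ∑ j, (x : ℤ × (Fin k → ℤ)).2 j * v i j + (x : ℤ × (Fin k → ℤ)).1 * a i := rfl
    have ey : slack v a (y : ℤ × (Fin k → ℤ)) i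
        = ∑ j, (y : ℤ × (Fin k → ℤ)).2 j * v i j + (y : ℤ × (Fin k → ℤ)).1 * a i := rfl
    rw [ex, ey] at hsle
    have e2 : -(((y : ℤ × (Fin k → ℤ)).1 - (x : ℤ × (Fin k → ℤ)).1) * a i)
        = (x : ℤ × (Fin k → ℤ)).1 * a i - (y : ℤ × (Fin k → ℤ)).1 * a i := by ring
    rw [e2]
    linarith

/-- irreducible elements of the monoid -/
def Irr : Set (Msub v a) :=
  {x | x ≠ 0 ∧ ∀ y z : Msub v a, y ≠ 0 → z ≠ 0 → x ≠ y + z}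

lemma finite_Irr : (Irr v a).Finite := by
  by_contra hinf
  have hinf' : (Irr v a).Infinite := hinf
  have f := hinf'.natEmbedding
  have hPWO : (Set.univ : Set (Fin (s+1) → ℕ)).IsPWO :=
    Set.isPWO_of_wellQuasiOrderedLE _
  obtain ⟨e, he⟩ := hPWO.exists_monotone_subseq (f := fun n => psi v a (f n : Msub v a))
    (fun n => Set.mem_univ _)
  have h01 : psi v a ((f (e 0) : {x // x ∈ Irr v a}) : Msub v a)
      ≤ psi v a ((f (e 1) : {x // x ∈ Irr v a}) : Msub v a) := he (by norm_num)
  have hne : ((f (e 0) : {x // x ∈ Irr v a}) : Msub v a)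
      ≠ ((f (e 1) : {x // x ∈ Irr v a}) : Msub v a) := by
    intro hcontra
    have h1 : f (e 0) = f (e 1) := Subtype.ext hcontra
    have h2 : e 0 = e 1 := f.injective h1
    exact absurd (e.injective h2) (by norm_num)
  have hsub := sub_mem v a h01
  set w : Msub v a := ⟨_, hsub⟩ with hw
  have hwne : w ≠ 0 := by
    intro hw0
    apply hne
    have : ((f (e 1) : {x // x ∈ Irr v a}) : Msub v a).1
        - ((f (e 0) : {x // x ∈ Irr v a}) : Msub v a).1 = 0 := congrArg Subtype.val hw0
    apply Subtype.ext
    have := sub_eq_zero.1 this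
    exact this.symm
  have hx0ne : ((f (e 0) : {x // x ∈ Irr v a}) : Msub v a) ≠ 0 := (f (e 0)).2.1
  have heq : ((f (e 1) : {x // x ∈ Irr v a}) : Msub v a)
      = ((f (e 0) : {x // x ∈ Irr v a}) : Msub v a) + w := by
    apply Subtype.ext
    show ((f (e 1) : {x // x ∈ Irr v a}) : Msub v a).1
        = ((f (e 0) : {x // x ∈ Irr v a}) : Msub v a).1
          + (((f (e 1) : {x // x ∈ Irr v a}) : Msub v a).1
            - ((f (e 0) : {x // x ∈ Irr v a}) : Msub v a).1)
    ring
  exact (f (e 1)).2.2 _ _ hx0ne hwne heq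

/-- total weight used for induction -/
def wt (x : Msub v a) : ℕ :=
  degM v a x + ∑ i, (slack v a (x : ℤ × (Fin k → ℤ)) i).toNat

lemma wt_add (x y : Msub v a) : wt v a (x + y) = wt v a x + wt v a y := by
  rw [wt, wt, wt, map_add]
  have hterm : ∀ i : Fin s, (slack v a ((x + y : Msub v a) : ℤ × (Fin k → ℤ)) i).toNat
      = (slack v a (x : ℤ × (Fin k → ℤ)) i).toNat
        + (slack v a (y : ℤ × (Fin k → ℤ)) i).toNat := by
    intro i
    have hadd : slack v a ((x + y : Msub v a) : ℤ × (Fin k → ℤ)) i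
        = slack v a (x : ℤ × (Fin k → ℤ)) i + slack v a (y : ℤ × (Fin k → ℤ)) i :=
      slack_add v a _ _ i
    have hx := slack_nonneg v a x.2 i
    have hy := slack_nonneg v a y.2 i
    omega
  rw [Finset.sum_congr rfl (fun i _ => hterm i), Finset.sum_add_distrib]
  ring

lemma wt_eq_zero
    (hbdd : Bornology.IsBounded
      {u : Fin k → ℝ | ∀ i, -(a i : ℝ) ≤ ∑ j, u j * (v i j : ℝ)})
    (x₀ : Fin k → ℝ) (hx₀ : ∀ i, -(a i : ℝ) ≤ ∑ j, x₀ j * (v i j : ℝ))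
    {x : Msub v a} (h : wt v a x = 0) : x = 0 := by
  rw [wt] at h
  have hdeg : degM v a x = 0 := by omega
  have hsum : ∑ i, (slack v a (x : ℤ × (Fin k → ℤ)) i).toNat = 0 := by omega
  have h1 : (x : ℤ × (Fin k → ℤ)).1 = 0 := by
    have h2 := x.2.1
    have h3 : (x : ℤ × (Fin k → ℤ)).1.toNat = 0 := hdeg
    omega
  have hslack : ∀ i, slack v a (x : ℤ × (Fin k → ℤ)) i = 0 := by
    intro i
    have h4 := (Finset.sum_eq_zero_iff.1 hsum) i (Finset.mem_univ i)
    have h5 := slack_nonneg v a x.2 i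
    omega
  have hu : ∀ i, 0 ≤ ∑ j, (x : ℤ × (Fin k → ℤ)).2 j * v i j := by
    intro i
    have h6 := hslack i
    rw [slack, h1] at h6
    omega
  have hu0 := lineality v a hbdd x₀ hx₀ _ hu
  apply Subtype.ext
  exact Prod.ext h1 hu0

lemma gen_aux
    (hbdd : Bornology.IsBounded
      {u : Fin k → ℝ | ∀ i, -(a i : ℝ) ≤ ∑ j, u j * (v i j : ℝ)})
    (x₀ : Fin k → ℝ) (hx₀ : ∀ i, -(a i : ℝ) ≤ ∑ j, x₀ j * (v i j : ℝ)) :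
    ∀ (N : ℕ) (x : Msub v a), wt v a x ≤ N → x ∈ AddSubmonoid.closure (Irr v a) := by
  intro N
  induction N with
  | zero =>
    intro x hW
    have hx0 : x = 0 := wt_eq_zero v a hbdd x₀ hx₀ (by omega)
    rw [hx0]
    exact zero_mem _
  | succ N ih =>
    intro x hW
    by_cases h0 : x = 0
    · rw [h0]; exact zero_mem _
    by_cases hIrr : x ∈ Irr v a
    · exact AddSubmonoid.subset_closure hIrr
    · have hsplit : ∃ y z : Msub v a, y ≠ 0 ∧ z ≠ 0 ∧ x = y + z := by
        by_contra hno
        push_neg at hno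
        exact hIrr ⟨h0, fun y z hy hz => hno y z hy hz⟩
      obtain ⟨y, z, hy, hz, rfl⟩ := hsplit
      have hWadd := wt_add v a y z
      have hy1 : 1 ≤ wt v a y :=
        Nat.one_le_iff_ne_zero.2 fun hw => hy (wt_eq_zero v a hbdd x₀ hx₀ hw)
      have hz1 : 1 ≤ wt v a z :=
        Nat.one_le_iff_ne_zero.2 fun hw => hz (wt_eq_zero v a hbdd x₀ hx₀ hw)
      exact add_mem (ih y (by omega)) (ih z (by omega))




end Geom

theorem main_result
    (k s : ℕ) (v : Fin s → (Fin k → ℤ)) (a : Fin s → ℤ)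
    (hbdd : Bornology.IsBounded
      {u : Fin k → ℝ | ∀ i, -(a i : ℝ) ≤ ∑ j, u j * (v i j : ℝ)}) :
    ∃ p q : Polynomial ℚ, q.coeff 0 ≠ 0 ∧
      (q : PowerSeries ℚ) *
        PowerSeries.mk (fun n =>
          (Nat.card {u : Fin k → ℤ | ∀ i, -((n : ℤ) * a i) ≤ ∑ j, u j * v i j} : ℚ)) =
      (p : PowerSeries ℚ) := by
  classical
  by_cases hne : ∃ x₀ : Fin k → ℝ, ∀ i, -(a i : ℝ) ≤ ∑ j, x₀ j * (v i j : ℝ)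
  · obtain ⟨x₀, hx₀⟩ := hne
    have hfin := finite_Irr v a
    set F := hfin.toFinset with hF
    set g : Fin F.card → ↥(Msub v a) := fun l => ((F.equivFin.symm l : {x // x ∈ F}) : ↥(Msub v a))
      with hg
    have hrange : Set.range g = Irr v a := by
      ext x
      constructor
      · rintro ⟨l, rfl⟩
        have hmem := (F.equivFin.symm l).2
        exact hfin.mem_toFinset.1 hmem
      · intro hx
        refine ⟨F.equivFin ⟨x, hfin.mem_toFinset.2 hx⟩, ?_⟩
        rw [hg]
        simp only [Equiv.symm_apply_apply]
    have hd : ∀ l, 1 ≤ degM v a (g l) := by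
      intro l
      have hgIrr : g l ∈ Irr v a := by
        rw [← hrange]
        exact ⟨l, rfl⟩
      by_contra hlt
      have hdeg0 : degM v a (g l) = 0 := by omega
      have h1 : ((g l : ℤ × (Fin k → ℤ))).1 = 0 := by
        have h2 := (g l).2.1
        have h3 : ((g l : ℤ × (Fin k → ℤ))).1.toNat = 0 := hdeg0
        omega
      have hu : ∀ i, 0 ≤ ∑ j, ((g l : ℤ × (Fin k → ℤ))).2 j * v i j := by
        intro i
        have h4 := (g l).2.2 i
        rw [h1] at h4
        simpa using h4
      have hu0 := lineality v a hbdd x₀ hx₀ _ hu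
      have hzero : g l = 0 := Subtype.ext (Prod.ext h1 hu0)
      exact hgIrr.1 hzero
    obtain ⟨p, q, hq0, hpq⟩ := key g (degM v a) hd
    refine ⟨p, q, hq0, ?_⟩
    have hcl : ∀ x : ↥(Msub v a), x ∈ AddSubmonoid.closure (Set.range g) := by
      intro x
      rw [hrange]
      exact gen_aux v a hbdd x₀ hx₀ (wt v a x) x le_rfl
    have hcard : ∀ n : ℕ,
        Nat.card {u : Fin k → ℤ | ∀ i, -((n : ℤ) * a i) ≤ ∑ j, u j * v i j}
        = Nat.card {x : ↥(Msub v a) //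
            x ∈ AddSubmonoid.closure (Set.range g) ∧ degM v a x = n} := by
      intro n
      apply Nat.card_congr
      refine ⟨fun u => ⟨⟨((n : ℤ), u.1), Int.natCast_nonneg n, fun i => u.2 i⟩,
          hcl _, by show ((n:ℤ)).toNat = n; simp⟩,
        fun x => ⟨((x.1 : ℤ × (Fin k → ℤ))).2, ?_⟩, ?_, ?_⟩
      · intro i
        have h1 : ((x.1 : ℤ × (Fin k → ℤ))).1 = (n : ℤ) := by
          have h2 := x.1.2.1
          have h3 : ((x.1 : ℤ × (Fin k → ℤ))).1.toNat = n := x.2.2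
          omega
        have h5 := x.1.2.2 i
        rwa [h1] at h5
      · intro u
        exact Subtype.ext rfl
      · intro x
        apply Subtype.ext
        apply Subtype.ext
        apply Prod.ext
        · show (n : ℤ) = ((x.1 : ℤ × (Fin k → ℤ))).1
          have h2 := x.1.2.1
          have h3 : ((x.1 : ℤ × (Fin k → ℤ))).1.toNat = n := x.2.2
          omega
        · rfl
    have hfun : (fun n : ℕ =>
        (Nat.card {u : Fin k → ℤ | ∀ i, -((n : ℤ) * a i) ≤ ∑ j, u j * v i j} : ℚ))
        = fun n : ℕ => (Nat.card {x : ↥(Msub v a) //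
            x ∈ AddSubmonoid.closure (Set.range g) ∧ degM v a x = n} : ℚ) := by
      funext n
      rw [hcard n]
    rw [hfun]
    exact hpq
  · refine ⟨Polynomial.C (Nat.card {u : Fin k → ℤ |
        ∀ i, -(((0:ℕ) : ℤ) * a i) ≤ ∑ j, u j * v i j} : ℚ), 1, by simp, ?_⟩
    rw [Polynomial.coe_one, one_mul]
    ext n
    rw [PowerSeries.coeff_mk, Polynomial.coeff_coe, Polynomial.coeff_C]
    rcases n with _ | m
    · rw [if_pos rfl]
    · rw [if_neg (by omega)]
      have hempty : {u : Fin k → ℤ |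
          ∀ i, -(((m+1 : ℕ) : ℤ) * a i) ≤ ∑ j, u j * v i j} = ∅ := by
        ext u
        simp only [Set.mem_setOf_eq, Set.mem_empty_iff_false, iff_false]
        intro hu
        apply hne
        refine ⟨fun j => (u j : ℝ) / ((m+1 : ℕ) : ℝ), fun i => ?_⟩
        have hn0 : (0:ℝ) < ((m+1 : ℕ) : ℝ) := by positivity
        have hcast : ((∑ j, u j * v i j : ℤ) : ℝ) = ∑ j, (u j : ℝ) * (v i j : ℝ) := by
          push_cast
          rfl
        have h1 : -(((m+1 : ℕ) : ℝ) * (a i : ℝ)) ≤ ∑ j, (u j : ℝ) * (v i j : ℝ) := by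
          rw [← hcast]
          exact_mod_cast hu i
        have hsum : ∑ j, ((u j : ℝ) / ((m+1 : ℕ) : ℝ)) * (v i j : ℝ)
            = (∑ j, (u j : ℝ) * (v i j : ℝ)) / ((m+1 : ℕ) : ℝ) := by
          rw [Finset.sum_div]
          exact Finset.sum_congr rfl fun j _ => by ring
        rw [hsum, le_div_iff₀ hn0]
        nlinarith [h1]
      rw [hempty]
      simp




end LatticeGFAux

/-- Let `v₁, …, vₛ ∈ ℤ^k`, `a₁, …, aₛ ∈ ℤ`, and for `n ≥ 0` let
`Pₙ = {u ∈ ℝ^k | ⟨u, vᵢ⟩ ≥ -n·aᵢ for all i}`. If `P₁` is bounded (so each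
`Pₙ ∩ ℤ^k` is finite), then the generating function `∑ₙ card(Pₙ ∩ ℤ^k)·tⁿ`
is a rational power series over `ℚ`. -/
theorem generating_function_of_lattice_point_counts_is_rational
    (k s : ℕ) (v : Fin s → (Fin k → ℤ)) (a : Fin s → ℤ)
    (hbdd : Bornology.IsBounded
      {u : Fin k → ℝ | ∀ i, -(a i : ℝ) ≤ ∑ j, u j * (v i j : ℝ)}) :
    ∃ p q : Polynomial ℚ, q.coeff 0 ≠ 0 ∧
      (q : PowerSeries ℚ) *
        PowerSeries.mk (fun n =>
          (Nat.card {u : Fin k → ℤ | ∀ i, -((n : ℤ) * a i) ≤ ∑ j, u j * v i j} : ℚ)) =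
      (p : PowerSeries ℚ) := by
  exact LatticeGFAux.main_result k s v a hbdd
end
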